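/- arXiv:2212.07804 — 2 statements merged into one kernel-verified Lean document; each statement's English description precedes it below -/
import Mathlib

section
/- Let (Ω, F, (F_n), P) be a filtered atomic probability space with associated collections 𝒜 and ℰ. Let 0 < ε < 1/2 and let k ∈ ℕ with k > −log₂(ε). Let A ∈ 𝒜 satisfy P((G_k(ℰ, A))*) > (1 − ε/2) P(A). Then there exists a function H_A : Ω → ℝ such that: (H1) |H_A| ≤ 1 almost everywhere; (H2) supp H_A ⊆ A; (H3) there exists t ∈ ℕ such that H_A is F_t-measurable; (H4) ∫_A H_A dP = 0; (H5) P({|H_A| ≠ 1} ∩ A) ≤ ε P(A); (H6) (1/2 − ε) P(A) ≤ P({H_A = ξ}) ≤ (1/2) P(A) for each ξ ∈ {−1, 1}; (H7) ∑_{n≥1} ‖E[H_A|F_n] − E[H_A|F_{n−1}]‖_{L¹(Ω)} ≤ 6 P(A). -/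
open MeasureTheory ENNReal

noncomputable section

namespace Paper

/-- A filtered atomic probability space structure on `(Ω, m0, P)`:
an increasing sequence of finite measurable partitions `part n` of `Ω` into atoms of
positive measure (with `part 0 = {univ}`, so that the `0`-th σ-algebra is trivial),
generating the ambient σ-algebra, together with a choice `star n A` of a child of
maximal measure for every atom `A` of `part n`. -/
structure FilteredAtomic (Ω : Type*) [m0 : MeasurableSpace Ω] (P : Measure Ω) where
  part : ℕ → Finset (Set Ω)
  part_zero : part 0 = {Set.univ}
  meas : ∀ n, ∀ A ∈ part n, MeasurableSet A
  pos : ∀ n, ∀ A ∈ part n, 0 < P A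
  disj : ∀ n, (part n : Set (Set Ω)).PairwiseDisjoint id
  cover : ∀ n, ⋃₀ (part n : Set (Set Ω)) = Set.univ
  refined : ∀ n, ∀ A ∈ part (n + 1), ∃ B ∈ part n, A ⊆ B
  gen : m0 = ⨆ n, MeasurableSpace.generateFrom (part n : Set (Set Ω))
  star : ℕ → Set Ω → Set Ω
  star_mem : ∀ n, ∀ A ∈ part n, star n A ∈ part (n + 1)
  star_sub : ∀ n, ∀ A ∈ part n, star n A ⊆ A
  star_max : ∀ n, ∀ A ∈ part n, ∀ B ∈ part (n + 1), B ⊆ A → P B ≤ P (star n A)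

variable {Ω : Type*} [m0 : MeasurableSpace Ω] {P : Measure Ω}

/-- The filtration `F_n` generated by the atoms of the `n`-th partition
(`F_0` is the trivial σ-algebra since `part 0 = {univ}`). -/
def FilteredAtomic.filt (F : FilteredAtomic Ω P) (n : ℕ) : MeasurableSpace Ω :=
  MeasurableSpace.generateFrom (F.part n : Set (Set Ω))

/-- The collection 𝒜 of all atoms. -/
def FilteredAtomic.atoms (F : FilteredAtomic Ω P) : Set (Set Ω) :=
  ⋃ n, (F.part n : Set (Set Ω))

/-- The collection 𝒞 = {star A : A ∈ 𝒜}. -/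
def FilteredAtomic.starSets (F : FilteredAtomic Ω P) : Set (Set Ω) :=
  {B | ∃ n, ∃ A ∈ F.part n, B = F.star n A}

/-- The collection ℰ = 𝒜 \ 𝒞. -/
def FilteredAtomic.eColl (F : FilteredAtomic Ω P) : Set (Set Ω) :=
  F.atoms \ F.starSets

/-- The collection ℬ = {Ã : A ∈ 𝒜, P(Ã) > 0}, where Ã = A \ star A. -/
def FilteredAtomic.bColl (F : FilteredAtomic Ω P) : Set (Set Ω) :=
  {S | (∃ n, ∃ A ∈ F.part n, S = A \ F.star n A) ∧ 0 < P S}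

/-- The Carleson constant [[R]] of a collection of sets. -/
def carleson (P : Measure Ω) (R : Set (Set Ω)) : ℝ≥0∞ :=
  ⨆ I ∈ R, (P I)⁻¹ * ∑' J : {J : Set Ω // J ∈ R ∧ J ⊆ I}, P (J : Set Ω)

/-- A collection is nested if any two members are disjoint or comparable. -/
def Nested (R : Set (Set Ω)) : Prop :=
  ∀ A ∈ R, ∀ B ∈ R, (A ∩ B).Nonempty → A ⊆ B ∨ B ⊆ A

/-- `G1 R A`: the maximal members of `R` strictly contained in `A`. -/
def G1 (R : Set (Set Ω)) (A : Set Ω) : Set (Set Ω) :=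
  {B | B ∈ R ∧ B ⊂ A ∧ ∀ C ∈ R, C ⊂ A → B ⊆ C → B = C}

/-- `Gk R k A`: the `k`-th generation of `R` inside `A`. -/
def Gk (R : Set (Set Ω)) : ℕ → Set Ω → Set (Set Ω)
  | 0, A => {A}
  | k + 1, A => ⋃ J ∈ Gk R k A, G1 R J

/-- Martingale difference `E[f|F_{n+1}] - E[f|F_n]`; with the present indexing this is the
paper's `Δ_{n+1} f`, so `fun n => F.mdiff f n` enumerates `Δ_1 f, Δ_2 f, …`. -/
def FilteredAtomic.mdiff (F : FilteredAtomic Ω P) {X : Type*} [NormedAddCommGroup X]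
    [NormedSpace ℝ X] [CompleteSpace X] (f : Ω → X) (n : ℕ) : Ω → X :=
  P[f|F.filt (n + 1)] - P[f|F.filt n]

/-- `(‖E f‖^p + ∑_{n ≥ 1} ‖E[f|F_n] - E[f|F_{n-1}]‖_{L^p}^p)^{1/p}` as an `ℝ≥0∞` number. -/
def FilteredAtomic.mtBound (F : FilteredAtomic Ω P) {X : Type*} [NormedAddCommGroup X]
    [NormedSpace ℝ X] [CompleteSpace X] (f : Ω → X) (p : ℝ) : ℝ≥0∞ :=
  ((‖∫ ω, f ω ∂P‖₊ : ℝ≥0∞) ^ p +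
    ∑' n : ℕ, eLpNorm (F.mdiff f n) (ENNReal.ofReal p) P ^ p) ^ (1 / p)

/-- `M` is a scalar martingale type `p` constant for the filtered space. -/
def ScalarMT (F : FilteredAtomic Ω P) (p M : ℝ) : Prop :=
  1 ≤ M ∧ ∀ g : Ω → ℝ, MemLp g (ENNReal.ofReal p) P →
    eLpNorm g (ENNReal.ofReal p) P ≤ ENNReal.ofReal M * F.mtBound g p

/-- The dyadic interval `[k/2^n, (k+1)/2^n) ⊆ [0,1)` (for `k < 2^n`). -/
def dyadic (n k : ℕ) : Set ℝ := Set.Ico ((k : ℝ) / 2 ^ n) (((k : ℝ) + 1) / 2 ^ n)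

/-- The Haar function `h_I = 1_{I⁺} - 1_{I⁻}` of the dyadic interval `I = [k/2^n, (k+1)/2^n)`. -/
def haarFn (n k : ℕ) : ℝ → ℝ :=
  (dyadic (n + 1) (2 * k)).indicator 1 - (dyadic (n + 1) (2 * k + 1)).indicator 1

/-- `X` has Haar type `p` with constant `C`: for every finitely supported family of vectors
indexed by dyadic subintervals of `[0,1)` (encoded as pairs `(n,k)` with `k < 2^n`),
`‖∑ x_I h_I‖_{L^p([0,1);X)} ≤ C (∑ ‖x_I‖^p |I|)^{1/p}`. -/
def HaarTypeWith (X : Type*) [NormedAddCommGroup X] [NormedSpace ℝ X] (p C : ℝ) : Prop :=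
  ∀ s : Finset (ℕ × ℕ), (∀ q ∈ s, q.2 < 2 ^ q.1) → ∀ x : ℕ × ℕ → X,
    (∫ t in Set.Ico (0 : ℝ) 1, ‖∑ q ∈ s, haarFn q.1 q.2 t • x q‖ ^ p) ^ (1 / p) ≤
      C * (∑ q ∈ s, ‖x q‖ ^ p * ((2 : ℝ) ^ q.1)⁻¹) ^ (1 / p)

/-- The order `≺` on atoms: earlier generation first, and within a generation larger
measure first. -/
def Prec (F : FilteredAtomic Ω P) (B₁ B₂ : Set Ω) : Prop :=
  ∃ l m : ℕ, B₁ ∈ F.part l ∧ B₂ ∈ F.part m ∧ (l < m ∨ (l = m ∧ P B₂ < P B₁))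

/-- `U_j = {B ∈ G_1(ℰ, Y_{j-1}) : B ≺ Y_j}`. -/
def Uset (F : FilteredAtomic Ω P) (Y : ℕ → Set Ω) (j : ℕ) : Set (Set Ω) :=
  {B | B ∈ G1 F.eColl (Y (j - 1)) ∧ Prec F B (Y j)}

/-- The sequence `Y` satisfies condition `D_m(A)`. -/
def CondD (F : FilteredAtomic Ω P) (A : Set Ω) (Y : ℕ → Set Ω) (m : ℕ) : Prop :=
  Y 0 = A ∧ (∀ j ∈ Finset.Icc 1 m, Y j ∈ G1 F.eColl (Y (j - 1))) ∧
    ∑ j ∈ Finset.Icc 1 m, P (⋃₀ Uset F Y j) ≤ 2⁻¹ * P A ∧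
    2⁻¹ * P A ≤ P (Y m) + ∑ j ∈ Finset.Icc 1 m, P (⋃₀ Uset F Y j)

/-- The collection ℰ supports all initial segments of a generalized Haar system with
constant `K`.  Dyadic intervals in `𝒟_n` are encoded as pairs `(j,k)`, `j ≤ n`, `k < 2^j`,
corresponding to `[k/2^j, (k+1)/2^j)`; `ε = δ·2^{-n-1}`. -/
def SupportsHaar (F : FilteredAtomic Ω P) (K : ℝ) : Prop :=
  0 < K ∧ ∀ (n : ℕ) (δ : ℝ), 0 < δ →
    ∃ (C : ℕ × ℕ → Set (Set Ω)) (g : ℕ × ℕ → Ω → ℝ) (A0 : Set Ω) (S : ℕ),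
      A0 ∈ F.eColl ∧
      -- (A1)
      C (0, 0) = {A0} ∧
      -- (A2)
      (∀ j k, j ≤ n → k < 2 ^ j → C (j, k) ⊆ {A | A ∈ F.eColl ∧ A ⊆ A0}) ∧
      -- (A3)
      (∀ j k, j ≤ n → k < 2 ^ j → (C (j, k)).PairwiseDisjoint id) ∧
      -- (A4)
      (∀ j k l i, j ≤ n → k < 2 ^ j → l ≤ n → i < 2 ^ l →
        ((⋃₀ C (j, k) ⊆ ⋃₀ C (l, i) ↔ dyadic j k ⊆ dyadic l i) ∧
          ((⋃₀ C (j, k) ∩ ⋃₀ C (l, i)).Nonempty ↔ (dyadic j k ∩ dyadic l i).Nonempty))) ∧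
      -- (A5)
      (∀ j k, j + 1 ≤ n → k < 2 ^ j →
        (∀ ω, g (j, k) ω ∈ Set.Icc (-1 : ℝ) 1) ∧
        Function.support (g (j, k)) ⊆ ⋃₀ C (j, k) ∧
        ⋃₀ C (j + 1, 2 * k) ⊆ {ω | g (j, k) ω = 1} ∧
        ⋃₀ C (j + 1, 2 * k + 1) ⊆ {ω | g (j, k) ω = -1}) ∧
      -- (A6)
      (∀ j k, j ≤ n → k < 2 ^ j → ∀ A ∈ C (j, k), MeasurableSet[F.filt S] A) ∧
      -- (A7)
      (∀ j k, j + 1 ≤ n → k < 2 ^ j → Measurable[F.filt S] (g (j, k))) ∧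
      -- (A8)
      (∀ A ∈ F.part S, ∀ m, 1 ≤ m → m ≤ S →
        ∀ j k j' k', j + 1 ≤ n → k < 2 ^ j → j' + 1 ≤ n → k' < 2 ^ j' →
          ¬ F.mdiff (g (j, k)) (m - 1) =ᵐ[P.restrict A] (0 : Ω → ℝ) →
          ¬ F.mdiff (g (j', k')) (m - 1) =ᵐ[P.restrict A] (0 : Ω → ℝ) →
          (j, k) = (j', k')) ∧
      -- (A9)
      (∀ j k, j + 1 ≤ n → k < 2 ^ j →
        ∑' i : ℕ, eLpNorm (F.mdiff (g (j, k)) i) 1 P ≤ ENNReal.ofReal K * P (⋃₀ C (j, k))) ∧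
      -- (A10)
      (∀ j k, j ≤ n → k < 2 ^ j →
        ENNReal.ofReal (((2 : ℝ) ^ j)⁻¹ - 2 * (δ * ((2 : ℝ) ^ (n + 1))⁻¹)) * P A0 ≤
            P (⋃₀ C (j, k)) ∧
          P (⋃₀ C (j, k)) ≤ ENNReal.ofReal (((2 : ℝ) ^ j)⁻¹) * P A0)

end Paper

namespace S3aux
open Paper

variable {Ω : Type*} [m0 : MeasurableSpace Ω] {P : Measure Ω} (F : Paper.FilteredAtomic Ω P)

lemma filt_le (n : ℕ) : F.filt n ≤ m0 :=
  MeasurableSpace.generateFrom_le fun s hs => F.meas n s hs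

lemma exists_mem_part (n : ℕ) (x : Ω) : ∃ B ∈ F.part n, x ∈ B := by
  have h := F.cover n
  have : x ∈ ⋃₀ (F.part n : Set (Set Ω)) := by rw [h]; trivial
  rcases this with ⟨B, hB, hx⟩
  exact ⟨B, hB, hx⟩

lemma eq_or_disj {n : ℕ} {B C : Set Ω} (hB : B ∈ F.part n) (hC : C ∈ F.part n) :
    B = C ∨ B ∩ C = ∅ := by
  by_cases h : B = C
  · exact Or.inl h
  · right
    have := (F.disj n) (Finset.mem_coe.2 hB) (Finset.mem_coe.2 hC) h
    simpa [Set.disjoint_iff_inter_eq_empty] using this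

lemma refine' {m n : ℕ} (h : m ≤ n) : ∀ {C : Set Ω}, C ∈ F.part n → ∃ B ∈ F.part m, C ⊆ B := by
  induction n, h using Nat.le_induction with
  | base => exact fun hC => ⟨_, hC, subset_rfl⟩
  | succ n hn ih =>
      intro C hC
      rcases F.refined n C hC with ⟨B, hB, hCB⟩
      rcases ih hB with ⟨B', hB', hBB'⟩
      exact ⟨B', hB', hCB.trans hBB'⟩

lemma subset_of_inter {m n : ℕ} (h : m ≤ n) {B C : Set Ω} (hB : B ∈ F.part m)
    (hC : C ∈ F.part n) (hx : (B ∩ C).Nonempty) : C ⊆ B := by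
  rcases refine' F h hC with ⟨B', hB', hCB'⟩
  rcases eq_or_disj F hB hB' with rfl | hd
  · exact hCB'
  · exfalso
    rcases hx with ⟨x, hxB, hxC⟩
    have : x ∈ B ∩ B' := ⟨hxB, hCB' hxC⟩
    simp [hd] at this

lemma meas_filt_of_le {m n : ℕ} (h : m ≤ n) {B : Set Ω} (hB : B ∈ F.part m) :
    MeasurableSet[F.filt n] B := by
  classical
  have hrep : B = ⋃ C ∈ (F.part n).filter (fun C => C ⊆ B), C := by
    apply Set.Subset.antisymm
    · intro x hx
      rcases exists_mem_part F n x with ⟨C, hC, hxC⟩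
      have hCB : C ⊆ B := subset_of_inter F h hB hC ⟨x, hx, hxC⟩
      exact Set.mem_biUnion (Finset.mem_filter.2 ⟨hC, hCB⟩) hxC
    · intro x hx
      rcases Set.mem_iUnion₂.1 hx with ⟨C, hC, hxC⟩
      exact (Finset.mem_filter.1 hC).2 hxC
  rw [hrep]
  exact Finset.measurableSet_biUnion _ fun C hC =>
    MeasurableSpace.measurableSet_generateFrom (Finset.mem_filter.1 hC).1

lemma filt_mono : Monotone F.filt := fun m n h =>
  MeasurableSpace.generateFrom_le fun B hB => meas_filt_of_le F h hB

lemma filt_rep {n : ℕ} {s : Set Ω} (hs : MeasurableSet[F.filt n] s) :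
    ∃ 𝒮 : Finset (Set Ω), ↑𝒮 ⊆ (F.part n : Set (Set Ω)) ∧ s = ⋃₀ ↑𝒮 := by
  classical
  refine MeasurableSpace.generateFrom_induction
    (p := fun (t : Set Ω) (_ : MeasurableSet[F.filt n] t) =>
      ∃ 𝒮 : Finset (Set Ω), ↑𝒮 ⊆ (F.part n : Set (Set Ω)) ∧ t = ⋃₀ ↑𝒮)
    (C := (F.part n : Set (Set Ω))) ?_ ?_ ?_ ?_ s hs
  · intro t ht _
    exact ⟨{t}, by simpa using ht, by simp⟩
  · exact ⟨∅, by simp, by simp⟩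
  · rintro t _ ⟨𝒮, h𝒮, rfl⟩
    refine ⟨(F.part n).filter (fun C => C ∉ 𝒮), ?_, ?_⟩
    · intro C hC; exact (Finset.mem_filter.1 hC).1
    · ext x
      simp only [Set.mem_compl_iff, Set.mem_sUnion, Finset.coe_filter, Set.mem_setOf_eq,
        Finset.mem_coe]
      constructor
      · intro hx
        rcases exists_mem_part F n x with ⟨C, hC, hxC⟩
        have hCnot : C ∉ 𝒮 := fun hmem => hx ⟨C, hmem, hxC⟩
        exact ⟨C, ⟨hC, hCnot⟩, hxC⟩
      · rintro ⟨C, ⟨hC, hCnot⟩, hxC⟩ ⟨C', hC', hxC'⟩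
        have hC'mem : C' ∈ F.part n := h𝒮 hC'
        rcases eq_or_disj F hC hC'mem with rfl | hd
        · exact hCnot hC'
        · have : x ∈ C ∩ C' := ⟨hxC, hxC'⟩
          simp [hd] at this
  · intro s' _ hp
    choose 𝒮 h𝒮 hrep using hp
    refine ⟨(F.part n).filter (fun C => ∃ i, C ∈ 𝒮 i), ?_, ?_⟩
    · intro C hC; exact (Finset.mem_filter.1 hC).1
    · ext x
      simp only [Set.mem_iUnion, Set.mem_sUnion, Finset.coe_filter, Set.mem_setOf_eq]
      constructor
      · rintro ⟨i, hxi⟩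
        rw [hrep i] at hxi
        rcases hxi with ⟨C, hC, hxC⟩
        exact ⟨C, ⟨h𝒮 i hC, ⟨i, hC⟩⟩, hxC⟩
      · rintro ⟨C, ⟨_, ⟨i, hCi⟩⟩, hxC⟩
        exact ⟨i, by rw [hrep i]; exact ⟨C, hCi, hxC⟩⟩



variable [IsProbabilityMeasure P]

lemma pos_of_mem {n : ℕ} {B : Set Ω} (hB : B ∈ F.part n) : 0 < P B := F.pos n B hB

lemma toReal_pos {n : ℕ} {B : Set Ω} (hB : B ∈ F.part n) : 0 < (P B).toReal :=
  ENNReal.toReal_pos (pos_of_mem F hB).ne' (measure_ne_top P B)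

lemma measure_sUnion {n : ℕ} {𝒮 : Finset (Set Ω)} (h𝒮 : ↑𝒮 ⊆ (F.part n : Set (Set Ω))) :
    P (⋃₀ ↑𝒮) = ∑ C ∈ 𝒮, P C := by
  rw [Set.sUnion_eq_biUnion]
  have : ⋃ C ∈ (↑𝒮 : Set (Set Ω)), C = ⋃ C ∈ 𝒮, C := by simp
  rw [this]
  exact measure_biUnion_finset ((F.disj n).subset h𝒮) (fun C hC => F.meas n C (h𝒮 hC))

/-- The explicit conditional expectation w.r.t. the `n`-th partition. -/
def pavg (n : ℕ) (f : Ω → ℝ) : Ω → ℝ :=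
  fun ω => ∑ C ∈ F.part n, Set.indicator C (fun _ => ((P C).toReal)⁻¹ * ∫ x in C, f x ∂P) ω

lemma pavg_apply {n : ℕ} {C : Set Ω} (hC : C ∈ F.part n) {f : Ω → ℝ} {ω : Ω} (hω : ω ∈ C) :
    pavg F n f ω = ((P C).toReal)⁻¹ * ∫ x in C, f x ∂P := by
  classical
  rw [pavg, Finset.sum_eq_single C]
  · simp [Set.indicator_of_mem hω]
  · intro D hD hne
    have hd : D = C ∨ D ∩ C = ∅ := eq_or_disj F hD hC
    rcases hd with rfl | hd
    · exact absurd rfl hne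
    · have : ω ∉ D := fun hωD => by
        have : ω ∈ D ∩ C := ⟨hωD, hω⟩
        simp [hd] at this
      simp [Set.indicator_of_notMem this]
  · intro h; exact absurd hC h

lemma abs_pavg_le {n : ℕ} {f : Ω → ℝ} (hf : Integrable f P) (hb : ∀ x, |f x| ≤ 1) (ω : Ω) :
    |pavg F n f ω| ≤ 1 := by
  rcases exists_mem_part F n ω with ⟨C, hC, hω⟩
  rw [pavg_apply F hC hω]
  have h1 : ‖∫ x in C, f x ∂P‖ ≤ 1 * (P C).toReal := by
    apply norm_setIntegral_le_of_norm_le_const (measure_lt_top P C)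
    · intro x _
      simpa [Real.norm_eq_abs] using hb x
  rw [abs_mul, abs_inv, abs_of_nonneg ENNReal.toReal_nonneg]
  rw [Real.norm_eq_abs, one_mul] at h1
  have hpos := toReal_pos F hC
  calc ((P C).toReal)⁻¹ * |∫ x in C, f x ∂P| ≤ ((P C).toReal)⁻¹ * (P C).toReal :=
        mul_le_mul_of_nonneg_left h1 (by positivity)
    _ = 1 := inv_mul_cancel₀ hpos.ne'

lemma pavg_measurable (n : ℕ) (f : Ω → ℝ) : Measurable[F.filt n] (pavg F n f) := by
  apply Finset.measurable_sum
  intro C hC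
  exact (@measurable_const ℝ Ω _ (F.filt n) _).indicator
    (MeasurableSpace.measurableSet_generateFrom hC)

lemma pavg_integrable (n : ℕ) (f : Ω → ℝ) : Integrable (pavg F n f) P := by
  apply integrable_finset_sum
  intro C hC
  exact (integrable_const _).indicator (F.meas n C hC)

lemma setIntegral_pavg_atom {n : ℕ} {C : Set Ω} (hC : C ∈ F.part n) (f : Ω → ℝ) :
    ∫ x in C, pavg F n f x ∂P = ∫ x in C, f x ∂P := by
  have hmeas : MeasurableSet C := F.meas n C hC
  have : ∫ x in C, pavg F n f x ∂P = ∫ x in C, (((P C).toReal)⁻¹ * ∫ y in C, f y ∂P) ∂P := by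
    apply setIntegral_congr_fun hmeas
    intro ω hω
    exact pavg_apply F hC hω
  rw [this, setIntegral_const, measureReal_def, smul_eq_mul, ← mul_assoc,
    mul_inv_cancel₀ (toReal_pos F hC).ne', one_mul]

lemma condexp_eq_pavg (n : ℕ) {f : Ω → ℝ} (hf : Integrable f P) :
    P[f | F.filt n] =ᵐ[P] pavg F n f := by
  have hle := filt_le F n
  haveI : SigmaFinite (P.trim hle) := by
    have : IsFiniteMeasure (P.trim hle) := isFiniteMeasure_trim hle
    infer_instance
  refine (ae_eq_condExp_of_forall_setIntegral_eq hle hf ?_ ?_ ?_).symm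
  · intro s _ _
    exact (pavg_integrable F n f).integrableOn
  · intro s hs _
    rcases filt_rep F hs with ⟨𝒮, h𝒮, rfl⟩
    have hmeas : ∀ C ∈ 𝒮, MeasurableSet C := fun C hC => F.meas n C (h𝒮 hC)
    have hdisj : (↑𝒮 : Set (Set Ω)).Pairwise (Function.onFun Disjoint (id : Set Ω → Set Ω)) :=
      (F.disj n).subset h𝒮
    rw [Set.sUnion_eq_biUnion]
    have hco : ⋃ C ∈ (↑𝒮 : Set (Set Ω)), C = ⋃ C ∈ 𝒮, C := by simp
    rw [hco]
    rw [integral_biUnion_finset 𝒮 hmeas hdisj (fun C hC => (pavg_integrable F n f).integrableOn),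
      integral_biUnion_finset 𝒮 hmeas hdisj (fun C hC => hf.integrableOn)]
    exact Finset.sum_congr rfl fun C hC => setIntegral_pavg_atom F (h𝒮 hC) f
  · exact ((pavg_measurable F n f).stronglyMeasurable).aestronglyMeasurable



lemma nonempty_of_mem {n : ℕ} {B : Set Ω} (hB : B ∈ F.part n) : B.Nonempty := by
  rw [Set.nonempty_iff_ne_empty]
  intro h
  have := pos_of_mem F hB
  simp [h] at this

lemma level_lt {l m : ℕ} {Y B : Set Ω} (hY : Y ∈ F.part l) (hB : B ∈ F.part m)
    (hBY : B ⊂ Y) : l < m := by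
  by_contra h
  push_neg at h
  obtain ⟨x, hx⟩ := nonempty_of_mem F hB
  have hYB : Y ⊆ B := subset_of_inter F h hB hY ⟨x, hx, hBY.1 hx⟩
  exact hBY.2 hYB

lemma half_of_G1 {Y B : Set Ω} (hY : Y ∈ F.atoms) (hB : B ∈ Paper.G1 F.eColl Y) :
    B ∈ F.atoms ∧ B ⊆ Y ∧ P B ≤ 2⁻¹ * P Y := by
  obtain ⟨hBe, hBY, -⟩ := hB
  have hBatom : B ∈ F.atoms := hBe.1
  refine ⟨hBatom, hBY.1, ?_⟩
  rcases Set.mem_iUnion.1 hY with ⟨l, hYl⟩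
  rcases Set.mem_iUnion.1 hBatom with ⟨m, hBm⟩
  have hlm : l < m := level_lt F hYl hBm hBY
  obtain ⟨m', rfl⟩ : ∃ m', m = m' + 1 := ⟨m - 1, by omega⟩
  rcases F.refined m' B hBm with ⟨Q, hQ, hBQ⟩
  have hQY : Q ⊆ Y := by
    apply subset_of_inter F (Nat.lt_succ_iff.1 hlm) hYl hQ
    rcases nonempty_of_mem F hBm with ⟨x, hx⟩
    exact ⟨x, hBY.1 hx, hBQ hx⟩
  set S := F.star m' Q with hS
  have hSmem : S ∈ F.part (m' + 1) := F.star_mem m' Q hQ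
  have hBneS : B ≠ S := by
    intro h
    exact hBe.2 ⟨m', Q, hQ, h⟩
  have hdisj : B ∩ S = ∅ := by
    rcases eq_or_disj F hBm hSmem with h | h
    · exact absurd h hBneS
    · exact h
  have hBS : P B + P S ≤ P Q := by
    have hun : P (B ∪ S) = P B + P S := by
      apply measure_union _ (F.meas _ _ hSmem)
      exact Set.disjoint_iff_inter_eq_empty.2 hdisj
    rw [← hun]
    exact measure_mono (Set.union_subset hBQ (F.star_sub m' Q hQ))
  have hmax : P B ≤ P S := F.star_max m' Q hQ B hBm hBQ
  have h2 : 2 * P B ≤ P Q := by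
    rw [two_mul]
    exact le_trans (add_le_add_right hmax _) hBS
  calc P B = 2⁻¹ * (2 * P B) := by
        rw [← mul_assoc, ENNReal.inv_mul_cancel (by norm_num) (by norm_num), one_mul]
    _ ≤ 2⁻¹ * P Q := mul_le_mul_right h2 _
    _ ≤ 2⁻¹ * P Y := mul_le_mul_right (measure_mono hQY) _

lemma Gk_prop (A' : Set Ω) (hA' : A' ∈ F.atoms) :
    ∀ j, ∀ B ∈ Paper.Gk F.eColl j A', B ∈ F.atoms ∧ B ⊆ A' ∧ P B ≤ (2⁻¹)^j * P A' := by
  intro j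
  induction j with
  | zero =>
      intro B hB
      rw [Paper.Gk] at hB
      rcases hB with rfl
      exact ⟨hA', subset_rfl, by simp⟩
  | succ j ih =>
      intro B hB
      rw [Paper.Gk] at hB
      rcases Set.mem_iUnion₂.1 hB with ⟨J, hJ, hBJ⟩
      obtain ⟨hJatom, hJsub, hJP⟩ := ih J hJ
      obtain ⟨hBatom, hBsub, hBP⟩ := half_of_G1 F hJatom hBJ
      refine ⟨hBatom, hBsub.trans hJsub, ?_⟩
      calc P B ≤ 2⁻¹ * P J := hBP
        _ ≤ 2⁻¹ * ((2⁻¹)^j * P A') := mul_le_mul_right hJP _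
        _ = (2⁻¹)^(j+1) * P A' := by ring



lemma greedy {n : ℕ} {D : Set Ω} (hD : D ∈ F.part n) {a τ : ℝ≥0∞}
    (h1 : a ≤ τ) (h2 : τ ≤ a + P D) :
    ∃ 𝒮 : Finset (Set Ω), ↑𝒮 ⊆ (F.part (n+1) : Set (Set Ω)) ∧ (∀ C ∈ 𝒮, C ⊆ D) ∧
      ∃ D' ∈ F.part (n+1), D' ⊆ D ∧ D' ∉ 𝒮 ∧
        a + ∑ C ∈ 𝒮, P C ≤ τ ∧ τ ≤ a + ∑ C ∈ 𝒮, P C + P D' := by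
  classical
  set 𝒞 := (F.part (n+1)).filter (fun C => C ⊆ D) with h𝒞
  have h𝒞sub : ∀ C ∈ 𝒞, C ∈ F.part (n+1) ∧ C ⊆ D := fun C hC =>
    ⟨(Finset.mem_filter.1 hC).1, (Finset.mem_filter.1 hC).2⟩
  have hUD : ⋃₀ ↑𝒞 = D := by
    apply Set.Subset.antisymm
    · rintro x ⟨C, hC, hxC⟩
      exact (h𝒞sub C hC).2 hxC
    · intro x hx
      rcases exists_mem_part F (n+1) x with ⟨C, hC, hxC⟩
      have hCD : C ⊆ D := subset_of_inter F (Nat.le_succ n) hD hC ⟨x, hx, hxC⟩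
      exact ⟨C, Finset.mem_filter.2 ⟨hC, hCD⟩, hxC⟩
  have hsum : ∑ C ∈ 𝒞, P C = P D := by
    rw [← hUD]
    exact (measure_sUnion F (n := n+1) (fun C hC => (h𝒞sub C (Finset.mem_coe.1 hC)).1)).symm
  have h𝒞ne : 𝒞.Nonempty := by
    rcases nonempty_of_mem F hD with ⟨x, hx⟩
    rcases exists_mem_part F (n+1) x with ⟨C, hC, hxC⟩
    exact ⟨C, Finset.mem_filter.2 ⟨hC, subset_of_inter F (Nat.le_succ n) hD hC ⟨x, hx, hxC⟩⟩⟩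
  have hsumne : ∀ 𝒮 : Finset (Set Ω), (∑ C ∈ 𝒮, P C) ≠ ⊤ := fun 𝒮 =>
    (ENNReal.sum_lt_top.2 fun C _ => measure_lt_top P C).ne
  set cand := 𝒞.powerset.filter (fun 𝒮 => a + ∑ C ∈ 𝒮, P C ≤ τ ∧ 𝒮 ≠ 𝒞) with hcand
  have hcne : cand.Nonempty := by
    refine ⟨∅, Finset.mem_filter.2 ⟨Finset.empty_mem_powerset _, by simpa using h1, ?_⟩⟩
    intro h
    exact h𝒞ne.ne_empty h.symm
  obtain ⟨𝒮, h𝒮cand, h𝒮max⟩ := Finset.exists_max_image cand (fun 𝒮 => ∑ C ∈ 𝒮, P C) hcne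
  obtain ⟨h𝒮pow, h𝒮le, h𝒮ne⟩ : 𝒮 ∈ 𝒞.powerset ∧ (a + ∑ C ∈ 𝒮, P C ≤ τ) ∧ 𝒮 ≠ 𝒞 := by
    have := Finset.mem_filter.1 h𝒮cand
    exact ⟨this.1, this.2.1, this.2.2⟩
  have h𝒮𝒞 : 𝒮 ⊆ 𝒞 := Finset.mem_powerset.1 h𝒮pow
  by_cases hex : ∃ X ∈ 𝒞, X ∉ 𝒮 ∧ τ ≤ a + ∑ C ∈ 𝒮, P C + P X
  · rcases hex with ⟨X, hX𝒞, hXnot, hXle⟩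
    exact ⟨𝒮, fun C hC => Finset.mem_coe.2 (h𝒞sub C (h𝒮𝒞 (Finset.mem_coe.1 hC))).1,
      fun C hC => (h𝒞sub C (h𝒮𝒞 hC)).2,
      X, (h𝒞sub X hX𝒞).1, (h𝒞sub X hX𝒞).2, hXnot, h𝒮le, hXle⟩
  · exfalso
    push_neg at hex
    obtain ⟨X₀, hX₀𝒞, hX₀not⟩ : ∃ X₀ ∈ 𝒞, X₀ ∉ 𝒮 := by
      rcases Finset.exists_of_ssubset (h𝒮𝒞.ssubset_of_ne h𝒮ne) with ⟨X₀, h1', h2'⟩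
      exact ⟨X₀, h1', h2'⟩
    have hlt := hex X₀ hX₀𝒞 hX₀not
    set 𝒮' := insert X₀ 𝒮 with h𝒮'
    have hsum' : ∑ C ∈ 𝒮', P C = P X₀ + ∑ C ∈ 𝒮, P C := Finset.sum_insert hX₀not
    have h𝒮'𝒞 : 𝒮' ⊆ 𝒞 := Finset.insert_subset hX₀𝒞 h𝒮𝒞
    have h𝒮'le : a + ∑ C ∈ 𝒮', P C ≤ τ := by
      rw [hsum']
      calc a + (P X₀ + ∑ C ∈ 𝒮, P C) = a + ∑ C ∈ 𝒮, P C + P X₀ := by ring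
        _ ≤ τ := hlt.le
    have h𝒮'lt : a + ∑ C ∈ 𝒮', P C < τ := by
      rw [hsum']
      calc a + (P X₀ + ∑ C ∈ 𝒮, P C) = a + ∑ C ∈ 𝒮, P C + P X₀ := by ring
        _ < τ := hlt
    have h𝒮'ne : 𝒮' ≠ 𝒞 := by
      intro h
      have : a + P D < τ := by rw [← hsum, ← h]; exact h𝒮'lt
      exact absurd h2 (not_le.2 this)
    have hmem : 𝒮' ∈ cand := Finset.mem_filter.2 ⟨Finset.mem_powerset.2 h𝒮'𝒞, h𝒮'le, h𝒮'ne⟩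
    have := h𝒮max 𝒮' hmem
    rw [hsum'] at this
    have hgt : ∑ C ∈ 𝒮, P C < P X₀ + ∑ C ∈ 𝒮, P C := by
      rw [add_comm]
      exact ENNReal.lt_add_right (hsumne 𝒮) (pos_of_mem F (h𝒞sub X₀ hX₀𝒞).1).ne'
    exact (lt_irrefl _ (lt_of_lt_of_le hgt this)).elim



variable (A : Set Ω) (ℓ : ℕ)

/-- Invariant of the greedy chain. -/
def Inv (n : ℕ) (st : Set Ω × Set Ω) : Prop :=
  st.1 ∈ F.part (ℓ + n) ∧ st.1 ⊆ A ∧ MeasurableSet[F.filt (ℓ + n)] st.2 ∧ st.2 ⊆ A ∧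
    st.2 ∩ st.1 = ∅ ∧ P st.2 ≤ 2⁻¹ * P A ∧ 2⁻¹ * P A ≤ P st.2 + P st.1

lemma inv_base (hA : A ∈ F.part ℓ) : Inv F A ℓ 0 (A, ∅) := by
  refine ⟨by simpa using hA, subset_rfl, by simp, by simp, by simp, by simp, ?_⟩
  simp only [measure_empty, zero_add]
  calc 2⁻¹ * P A ≤ 1 * P A := mul_le_mul_left (by norm_num) _
    _ = P A := one_mul _

lemma inv_step {n : ℕ} {st : Set Ω × Set Ω} (h : Inv F A ℓ n st) :
    ∃ st', Inv F A ℓ (n+1) st' ∧ st'.1 ⊆ st.1 ∧ st.2 ⊆ st'.2 ∧ st'.2 ⊆ st.2 ∪ st.1 := by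
  classical
  obtain ⟨hD, hDA, hSmeas, hSA, hSD, hS1, hS2⟩ := h
  obtain ⟨𝒮, h𝒮part, h𝒮D, D', hD', hD'D, hD'not, hle1, hle2⟩ :=
    greedy F hD (a := P st.2) (τ := 2⁻¹ * P A) hS1 hS2
  have hUmeas0 : MeasurableSet[F.filt (ℓ + n + 1)] (⋃₀ ↑𝒮) := by
    rw [Set.sUnion_eq_biUnion]
    have : ⋃ C ∈ (↑𝒮 : Set (Set Ω)), C = ⋃ C ∈ 𝒮, C := by simp
    rw [this]
    exact Finset.measurableSet_biUnion _ fun C hC =>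
      MeasurableSpace.measurableSet_generateFrom (h𝒮part (Finset.mem_coe.2 hC))
  have hUmeas : MeasurableSet (⋃₀ ↑𝒮) := filt_le F (ℓ + n + 1) _ hUmeas0
  have hUsub : ⋃₀ ↑𝒮 ⊆ st.1 := by
    rintro x ⟨C, hC, hxC⟩
    exact h𝒮D C (Finset.mem_coe.1 hC) hxC
  have hdisjSU : st.2 ∩ ⋃₀ ↑𝒮 = ∅ := by
    rw [Set.eq_empty_iff_forall_notMem]
    rintro x ⟨hxS, hxU⟩
    have : x ∈ st.2 ∩ st.1 := ⟨hxS, hUsub hxU⟩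
    simp [hSD] at this
  have hPU : P (⋃₀ ↑𝒮) = ∑ C ∈ 𝒮, P C := measure_sUnion F h𝒮part
  have hPadd : P (st.2 ∪ ⋃₀ ↑𝒮) = P st.2 + ∑ C ∈ 𝒮, P C := by
    rw [measure_union _ hUmeas, hPU]
    exact Set.disjoint_iff_inter_eq_empty.2 hdisjSU
  refine ⟨(D', st.2 ∪ ⋃₀ ↑𝒮), ⟨?_, hD'D.trans hDA, ?_, ?_, ?_, ?_, ?_⟩, hD'D, ?_, ?_⟩
  · show D' ∈ F.part (ℓ + (n + 1))
    rw [← Nat.add_assoc]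
    exact hD'
  · show MeasurableSet[F.filt (ℓ + (n+1))] (st.2 ∪ ⋃₀ ↑𝒮)
    rw [← Nat.add_assoc]
    exact MeasurableSet.union (filt_mono F (Nat.le_succ _) _ hSmeas) hUmeas0
  · exact Set.union_subset hSA (hUsub.trans hDA)
  · show (st.2 ∪ ⋃₀ ↑𝒮) ∩ D' = ∅
    rw [Set.eq_empty_iff_forall_notMem]
    rintro x ⟨hx1, hx2⟩
    rcases hx1 with hxS | hxU
    · have : x ∈ st.2 ∩ st.1 := ⟨hxS, hD'D hx2⟩
      simp [hSD] at this
    · rcases hxU with ⟨C, hC, hxC⟩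
      have hCmem := h𝒮part (Finset.mem_coe.2 hC)
      rcases eq_or_disj F hCmem hD' with rfl | hdisj
      · exact hD'not (Finset.mem_coe.1 hC)
      · have : x ∈ C ∩ D' := ⟨hxC, hx2⟩
        simp [hdisj] at this
  · show P (st.2 ∪ ⋃₀ ↑𝒮) ≤ 2⁻¹ * P A
    rw [hPadd]; exact hle1
  · show 2⁻¹ * P A ≤ P (st.2 ∪ ⋃₀ ↑𝒮) + P D'
    rw [hPadd]; exact hle2
  · exact Set.subset_union_left
  · exact Set.union_subset (Set.subset_union_left) (hUsub.trans Set.subset_union_right)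

variable (hA : A ∈ F.part ℓ)

/-- The greedy chain. -/
noncomputable def chainAux : (n : ℕ) → {st : Set Ω × Set Ω // Inv F A ℓ n st}
  | 0 => ⟨(A, ∅), inv_base F A ℓ hA⟩
  | n + 1 => ⟨Classical.choose (inv_step F A ℓ (chainAux n).2),
      (Classical.choose_spec (inv_step F A ℓ (chainAux n).2)).1⟩

/-- chain atoms. -/
noncomputable def chD (n : ℕ) : Set Ω := (chainAux F A ℓ hA n).1.1
/-- selected (+1) region. -/
noncomputable def chS (n : ℕ) : Set Ω := (chainAux F A ℓ hA n).1.2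

lemma chain_inv (n : ℕ) : Inv F A ℓ n (chD F A ℓ hA n, chS F A ℓ hA n) :=
  (chainAux F A ℓ hA n).2

lemma chain_rel (n : ℕ) :
    chD F A ℓ hA (n+1) ⊆ chD F A ℓ hA n ∧ chS F A ℓ hA n ⊆ chS F A ℓ hA (n+1) ∧
      chS F A ℓ hA (n+1) ⊆ chS F A ℓ hA n ∪ chD F A ℓ hA n := by
  have h := (Classical.choose_spec (inv_step F A ℓ (chainAux F A ℓ hA n).2)).2
  exact h

lemma chD_zero : chD F A ℓ hA 0 = A := rfl
lemma chS_zero : chS F A ℓ hA 0 = ∅ := rfl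

lemma chD_mono : ∀ {i j : ℕ}, i ≤ j → chD F A ℓ hA j ⊆ chD F A ℓ hA i := by
  intro i j h
  induction j, h using Nat.le_induction with
  | base => exact subset_rfl
  | succ n hn ih => exact ((chain_rel F A ℓ hA n).1).trans ih

lemma chS_mono : ∀ {i j : ℕ}, i ≤ j → chS F A ℓ hA i ⊆ chS F A ℓ hA j := by
  intro i j h
  induction j, h using Nat.le_induction with
  | base => exact subset_rfl
  | succ n hn ih => exact ih.trans (chain_rel F A ℓ hA n).2.1

lemma chS_sub : ∀ {i j : ℕ}, i ≤ j → chS F A ℓ hA j ⊆ chS F A ℓ hA i ∪ chD F A ℓ hA i := by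
  intro i j h
  induction j, h using Nat.le_induction with
  | base => exact Set.subset_union_left
  | succ n hn ih =>
      refine ((chain_rel F A ℓ hA n).2.2).trans ?_
      apply Set.union_subset
      · exact ih
      · exact (chD_mono F A ℓ hA hn).trans Set.subset_union_right



lemma countable_atoms : F.atoms.Countable :=
  Set.countable_iUnion (fun n => (F.part n).countable_toSet)

lemma exists_small_level {ε : ℝ} {k : ℕ} (hk0 : k ≠ 0)
    (hkε : ((2:ℝ≥0∞)⁻¹)^k < ENNReal.ofReal ε) (hε1 : ε ≤ 2)
    (hεnn : 0 ≤ ε)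
    (hbig : ENNReal.ofReal (1 - ε / 2) * P A < P (⋃₀ Paper.Gk F.eColl k A)) :
    ∃ n, P (chD F A ℓ hA n) < ENNReal.ofReal ε * P A := by
  by_contra hcon
  push_neg at hcon
  have hAatoms : A ∈ F.atoms := Set.mem_iUnion.2 ⟨ℓ, hA⟩
  set W := ⋃₀ Paper.Gk F.eColl k A with hW
  have hGsub : Paper.Gk F.eColl k A ⊆ F.atoms := fun B hB => (Gk_prop F A hAatoms k B hB).1
  have hWmeas : MeasurableSet W := by
    apply MeasurableSet.sUnion ((countable_atoms F).mono hGsub)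
    intro B hB
    rcases Set.mem_iUnion.1 (hGsub hB) with ⟨L, hBL⟩
    exact F.meas L B hBL
  have hWsub : W ⊆ A := by
    rintro x ⟨B, hB, hxB⟩
    exact (Gk_prop F A hAatoms k B hB).2.1 hxB
  set K := ⋂ n, chD F A ℓ hA n with hK
  have hKW : K ∩ W = ∅ := by
    rw [Set.eq_empty_iff_forall_notMem]
    rintro x ⟨hxK, B, hB, hxB⟩
    rcases Set.mem_iUnion.1 (hGsub hB) with ⟨L, hBL⟩
    -- B is a strict subset of A since k ≥ 1
    have hBstrict : B ⊂ A := by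
      obtain ⟨k', rfl⟩ : ∃ k', k = k' + 1 := ⟨k - 1, by omega⟩
      rw [Paper.Gk] at hB
      rcases Set.mem_iUnion₂.1 hB with ⟨J, hJ, hBJ⟩
      have hJsub : J ⊆ A := (Gk_prop F A hAatoms k' J hJ).2.1
      exact lt_of_lt_of_le hBJ.2.1 hJsub
    have hL : ℓ < L := level_lt F hA hBL hBstrict
    have hDlev : chD F A ℓ hA (L - ℓ) ∈ F.part L := by
      have := (chain_inv F A ℓ hA (L - ℓ)).1
      have heq : ℓ + (L - ℓ) = L := by omega
      rwa [heq] at this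
    have hxD : x ∈ chD F A ℓ hA (L - ℓ) := Set.mem_iInter.1 hxK (L - ℓ)
    rcases eq_or_disj F hDlev hBL with heq | hdisj
    · have hPB := (Gk_prop F A hAatoms k B hB).2.2
      have h1 : P (chD F A ℓ hA (L - ℓ)) ≤ ((2:ℝ≥0∞)⁻¹)^k * P A := heq ▸ hPB
      have h2 : ((2:ℝ≥0∞)⁻¹)^k * P A < ENNReal.ofReal ε * P A := by
        rw [mul_comm _ (P A), mul_comm _ (P A)]
        exact ENNReal.mul_lt_mul_right (pos_of_mem F hA).ne' (measure_ne_top P A) hkε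
      exact absurd (hcon (L - ℓ)) (not_le.2 (lt_of_le_of_lt h1 h2))
    · have : x ∈ chD F A ℓ hA (L - ℓ) ∩ B := ⟨hxD, hxB⟩
      simp [hdisj] at this
  -- measure bounds
  have hKmeas : ∀ n, MeasurableSet (chD F A ℓ hA n) := fun n =>
    F.meas _ _ (chain_inv F A ℓ hA n).1
  have hanti : Antitone (fun n => chD F A ℓ hA n) := by
    intro i j h
    exact chD_mono F A ℓ hA h
  have htend := MeasureTheory.tendsto_measure_iInter_atTop
    (μ := P) (fun n => (hKmeas n).nullMeasurableSet) hanti ⟨0, measure_ne_top P _⟩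
  have hPK : ENNReal.ofReal ε * P A ≤ P K := by
    apply ge_of_tendsto htend
    filter_upwards with n using hcon n
  have hKsub : K ⊆ A := by
    intro x hx
    have := Set.mem_iInter.1 hx 0
    rwa [chD_zero] at this
  have hsum : P K + P W ≤ P A := by
    rw [← measure_union _ hWmeas]
    · exact measure_mono (Set.union_subset hKsub hWsub)
    · exact Set.disjoint_iff_inter_eq_empty.2 hKW
  have hlt : ENNReal.ofReal ε * P A + ENNReal.ofReal (1 - ε/2) * P A < P A := by
    calc ENNReal.ofReal ε * P A + ENNReal.ofReal (1 - ε/2) * P A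
        < ENNReal.ofReal ε * P A + P W := by
          apply ENNReal.add_lt_add_left _ hbig
          exact ENNReal.mul_ne_top ENNReal.ofReal_ne_top (measure_ne_top P A)
      _ ≤ P K + P W := add_le_add_left hPK _
      _ ≤ P A := hsum
  have heq : ENNReal.ofReal ε * P A + ENNReal.ofReal (1 - ε/2) * P A
      = ENNReal.ofReal (1 + ε/2) * P A := by
    rw [← add_mul, ← ENNReal.ofReal_add hεnn (by linarith)]
    ring_nf
  rw [heq] at hlt
  have hge : P A ≤ ENNReal.ofReal (1 + ε/2) * P A := by
    conv_lhs => rw [← one_mul (P A)]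
    apply mul_le_mul_left
    exact ENNReal.one_le_ofReal.2 (by linarith)
  exact absurd hlt (not_lt.2 hge)



lemma integral_const_on {n : ℕ} {C : Set Ω} (hC : C ∈ F.part n) {f : Ω → ℝ} {v : ℝ}
    (hv : ∀ x ∈ C, f x = v) : ∫ x in C, f x ∂P = v * (P C).toReal := by
  rw [setIntegral_congr_fun (F.meas n C hC) (fun x hx => hv x hx), setIntegral_const,
    measureReal_def, smul_eq_mul, mul_comm]

lemma pavg_const_on {n : ℕ} {C : Set Ω} (hC : C ∈ F.part n) {f : Ω → ℝ} {v : ℝ}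
    (hv : ∀ x ∈ C, f x = v) {x : Ω} (hx : x ∈ C) : pavg F n f x = v := by
  rw [pavg_apply F hC hx, integral_const_on F hC hv, mul_comm v, ← mul_assoc,
    inv_mul_cancel₀ (toReal_pos F hC).ne', one_mul]

lemma abs_setIntegral_le {s : Set Ω} (hs : MeasurableSet s) {f : Ω → ℝ}
    (hf : Integrable f P) (habs : ∀ x, |f x| ≤ 1) :
    |∫ x in s, f x ∂P| ≤ (P s).toReal := by
  have := norm_setIntegral_le_of_norm_le_const (μ := P) (s := s) (f := f) (C := 1)
    (measure_lt_top P s) (fun x _ => by simpa [Real.norm_eq_abs] using habs x)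
  simpa [Real.norm_eq_abs, measureReal_def] using this

lemma delta_bound {m : ℕ} {D D' : Set Ω} (hD : D ∈ F.part m) (hD' : D' ∈ F.part (m+1))
    (hsub : D' ⊆ D) {f : Ω → ℝ} (hf : Integrable f P) (habs : ∀ x, |f x| ≤ 1)
    (hcon : ∀ C ∈ F.part m, C ≠ D → ∃ v, ∀ x ∈ C, f x = v)
    (hcon' : ∀ C ∈ F.part (m+1), C ≠ D' → ∃ v, ∀ x ∈ C, f x = v) :
    eLpNorm (pavg F (m+1) f - pavg F m f) 1 P ≤ 4 * (P D - P D') := by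
  classical
  set p : ℝ := (P D).toReal with hp
  set p' : ℝ := (P D').toReal with hp'
  have hppos : 0 < p := toReal_pos F hD
  have hp'pos : 0 < p' := toReal_pos F hD'
  have hple : p' ≤ p := ENNReal.toReal_mono (measure_ne_top P D) (measure_mono hsub)
  set fD : ℝ := ∫ x in D, f x ∂P with hfD
  set fD' : ℝ := ∫ x in D', f x ∂P with hfD'
  have hfD'le : |fD'| ≤ p' := abs_setIntegral_le (F.meas _ _ hD') hf habs
  have hdiffle : |fD - fD'| ≤ p - p' := by
    have hdm : MeasurableSet (D \ D') := (F.meas _ _ hD).diff (F.meas _ _ hD')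
    have h1 : ∫ x in D \ D', f x ∂P = fD - fD' :=
      integral_diff (F.meas _ _ hD') hf.integrableOn hsub
    have h2 := abs_setIntegral_le hdm hf habs
    rw [h1] at h2
    have h3 : (P (D \ D')).toReal = p - p' := by
      rw [measure_diff hsub (F.meas _ _ hD').nullMeasurableSet (measure_ne_top P D'),
        ENNReal.toReal_sub_of_le (measure_mono hsub) (measure_ne_top P D)]
    rwa [h3] at h2
  set b : ℝ := |p'⁻¹ * fD' - p⁻¹ * fD| with hb
  have hbkey : b * p' ≤ 2 * (p - p') := by
    have key : (p'⁻¹ * fD' - p⁻¹ * fD) * p' = fD' * (1 - p'/p) - (p'/p) * (fD - fD') := by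
      field_simp
      ring
    have habs2 : b * p' = |fD' * (1 - p'/p) - (p'/p) * (fD - fD')| := by
      calc b * p' = |(p'⁻¹ * fD' - p⁻¹ * fD) * p'| := by
            rw [hb, abs_mul, abs_of_pos hp'pos]
        _ = _ := by rw [key]
    have hρ1 : (0:ℝ) ≤ 1 - p'/p := by
      have : p'/p ≤ 1 := div_le_one_of_le₀ hple hppos.le
      linarith
    have hρ0 : (0:ℝ) ≤ p'/p := div_nonneg hp'pos.le hppos.le
    have h4 : |fD' * (1 - p'/p) - (p'/p) * (fD - fD')|
        ≤ p' * (1 - p'/p) + (p'/p) * (p - p') := by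
      calc |fD' * (1 - p'/p) - (p'/p) * (fD - fD')|
          ≤ |fD' * (1 - p'/p)| + |(p'/p) * (fD - fD')| := abs_sub _ _
        _ = |fD'| * (1 - p'/p) + (p'/p) * |fD - fD'| := by
            rw [abs_mul, abs_mul, abs_of_nonneg hρ1, abs_of_nonneg hρ0]
        _ ≤ p' * (1 - p'/p) + (p'/p) * (p - p') := by
            apply add_le_add
            · exact mul_le_mul_of_nonneg_right hfD'le hρ1
            · exact mul_le_mul_of_nonneg_left hdiffle hρ0
    have h5 : p' * (1 - p'/p) + (p'/p) * (p - p') ≤ 2 * (p - p') := by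
      have h6 : p' * (1 - p'/p) = (p'/p) * (p - p') := by field_simp
      rw [h6, ← two_mul]
      have : (p'/p) * (p - p') ≤ 1 * (p - p') :=
        mul_le_mul_of_nonneg_right (div_le_one_of_le₀ hple hppos.le) (by linarith)
      calc 2 * ((p'/p) * (p - p')) = 2 * (p'/p) * (p - p') := by ring
        _ ≤ 2 * 1 * (p - p') := by nlinarith
        _ = 2 * (p - p') := by ring
    rw [habs2]
    exact h4.trans h5
  -- pointwise bound
  set g : Ω → ℝ := pavg F (m+1) f - pavg F m f with hg
  have hpt : ∀ x, (‖g x‖₊ : ℝ≥0∞) ≤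
      Set.indicator (D \ D') (fun _ => (2:ℝ≥0∞)) x
        + Set.indicator D' (fun _ => ENNReal.ofReal b) x := by
    intro x
    by_cases hxD' : x ∈ D'
    · have hgx : g x = p'⁻¹ * fD' - p⁻¹ * fD := by
        simp only [hg, Pi.sub_apply]
        rw [pavg_apply F hD' hxD', pavg_apply F hD (hsub hxD')]
      rw [Set.indicator_of_notMem (fun h => h.2 hxD'), Set.indicator_of_mem hxD',
        zero_add, hgx]
      exact (Real.enorm_eq_ofReal_abs _).le
    · by_cases hxD : x ∈ D
      · rw [Set.indicator_of_mem (show x ∈ D \ D' from ⟨hxD, hxD'⟩)]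
        have h1 : |g x| ≤ 2 := by
          simp only [hg, Pi.sub_apply]
          calc |pavg F (m+1) f x - pavg F m f x|
              ≤ |pavg F (m+1) f x| + |pavg F m f x| := abs_sub _ _
            _ ≤ 1 + 1 := add_le_add (abs_pavg_le F hf habs x) (abs_pavg_le F hf habs x)
            _ = 2 := by norm_num
        calc (‖g x‖₊ : ℝ≥0∞) = ENNReal.ofReal |g x| := Real.enorm_eq_ofReal_abs _
          _ ≤ ENNReal.ofReal 2 := ENNReal.ofReal_le_ofReal h1
          _ ≤ 2 + _ := by
              rw [ENNReal.ofReal_ofNat]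
              exact le_add_right le_rfl
      · -- off the chain: g x = 0
        rcases exists_mem_part F m x with ⟨C, hC, hxC⟩
        have hCD : C ≠ D := fun h => hxD (h ▸ hxC)
        obtain ⟨v, hv⟩ := hcon C hC hCD
        rcases exists_mem_part F (m+1) x with ⟨C', hC', hxC'⟩
        have hC'C : C' ⊆ C := subset_of_inter F (Nat.le_succ m) hC hC' ⟨x, hxC, hxC'⟩
        have hC'D' : C' ≠ D' := fun h => hxD' (h ▸ hxC')
        obtain ⟨v', hv'⟩ := hcon' C' hC' hC'D'
        have hvv' : v' = v := by
          rcases nonempty_of_mem F hC' with ⟨y, hy⟩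
          rw [← hv' y hy, hv y (hC'C hy)]
        have hgx : g x = 0 := by
          simp only [hg, Pi.sub_apply]
          rw [pavg_const_on F hC' hv' hxC', pavg_const_on F hC hv hxC, hvv', sub_self]
        simp [hgx]
  -- integrate
  have hmeas1 : MeasurableSet (D \ D') := (F.meas _ _ hD).diff (F.meas _ _ hD')
  calc eLpNorm g 1 P = ∫⁻ x, (‖g x‖₊ : ℝ≥0∞) ∂P := eLpNorm_one_eq_lintegral_enorm
    _ ≤ ∫⁻ x, (Set.indicator (D \ D') (fun _ => (2:ℝ≥0∞)) x
          + Set.indicator D' (fun _ => ENNReal.ofReal b) x) ∂P := lintegral_mono hpt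
    _ = 2 * P (D \ D') + ENNReal.ofReal b * P D' := by
        rw [lintegral_add_left (measurable_const.indicator hmeas1)]
        rw [lintegral_indicator_const hmeas1, lintegral_indicator_const (F.meas _ _ hD')]
    _ ≤ 2 * (P D - P D') + 2 * (P D - P D') := by
        apply add_le_add
        · apply mul_le_mul_right
          rw [measure_diff hsub (F.meas _ _ hD').nullMeasurableSet (measure_ne_top P D')]
        · have h1 : ENNReal.ofReal b * P D' = ENNReal.ofReal (b * p') := by
            rw [ENNReal.ofReal_mul (abs_nonneg _), ENNReal.ofReal_toReal (measure_ne_top P D')]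
          have h2 : ENNReal.ofReal (b * p') ≤ ENNReal.ofReal (2 * (p - p')) :=
            ENNReal.ofReal_le_ofReal hbkey
          have h3 : ENNReal.ofReal (2 * (p - p')) = 2 * (P D - P D') := by
            rw [ENNReal.ofReal_mul (by norm_num), ENNReal.ofReal_ofNat,
              ENNReal.ofReal_sub _ hp'pos.le, ENNReal.ofReal_toReal (measure_ne_top P D),
              ENNReal.ofReal_toReal (measure_ne_top P D')]
          rw [h1]
          exact h2.trans_eq h3
    _ = 4 * (P D - P D') := by ring



lemma pavg_zero {m : ℕ} (hm : m ≤ ℓ) (hA : A ∈ F.part ℓ) {f : Ω → ℝ}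
    (hsupp : ∀ x, x ∉ A → f x = 0) (hint : ∫ x, f x ∂P = 0) (x : Ω) :
    pavg F m f x = 0 := by
  rcases exists_mem_part F m x with ⟨C, hC, hxC⟩
  rw [pavg_apply F hC hxC]
  by_cases hne : (C ∩ A).Nonempty
  · have hAC : A ⊆ C := subset_of_inter F hm hC hA hne
    have hfc : f = C.indicator f := by
      funext y
      by_cases hy : y ∈ C
      · rw [Set.indicator_of_mem hy]
      · rw [Set.indicator_of_notMem hy, hsupp y (fun hyA => hy (hAC hyA))]
    have : ∫ y in C, f y ∂P = 0 := by
      rw [← integral_indicator (F.meas m C hC), ← hfc, hint]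
    rw [this, mul_zero]
  · have : ∀ y ∈ C, f y = 0 := by
      intro y hy
      apply hsupp
      intro hyA
      exact hne ⟨y, hy, hyA⟩
    rw [integral_const_on F hC this, zero_mul, mul_zero]

lemma telescope (g : ℕ → ℝ≥0∞) (hanti : ∀ n, g (n+1) ≤ g n) :
    ∀ N, ∑ n ∈ Finset.range N, (g n - g (n+1)) = g 0 - g N := by
  intro N
  induction N with
  | zero => simp
  | succ N ih =>
      rw [Finset.sum_range_succ, ih]
      have h1 : g N ≤ g 0 := by
        clear ih
        induction N with
        | zero => exact le_rfl
        | succ N ih2 => exact (hanti N).trans ih2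
      exact tsub_add_tsub_cancel h1 (hanti N)

end S3aux


open S3aux


open MeasureTheory ENNReal in
/-- Lemma on proto-Haar functions `H_A`. -/
theorem statement_3 {Ω : Type*} [m0 : MeasurableSpace Ω] (P : Measure Ω)
    [IsProbabilityMeasure P] (F : Paper.FilteredAtomic Ω P)
    (ε : ℝ) (hε0 : 0 < ε) (hε : ε < 1 / 2)
    (k : ℕ) (hk : -Real.logb 2 ε < (k : ℝ))
    (A : Set Ω) (hA : A ∈ F.atoms)
    (hbig : ENNReal.ofReal (1 - ε / 2) * P A < P (⋃₀ Paper.Gk F.eColl k A)) :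
    ∃ H : Ω → ℝ,
      -- (H1)
      (∀ᵐ ω ∂P, |H ω| ≤ 1) ∧
      -- (H2)
      Function.support H ⊆ A ∧
      -- (H3)
      (∃ t : ℕ, Measurable[F.filt t] H) ∧
      -- (H4)
      (∫ ω in A, H ω ∂P) = 0 ∧
      -- (H5)
      P ({ω | |H ω| ≠ 1} ∩ A) ≤ ENNReal.ofReal ε * P A ∧
      -- (H6)
      (∀ ξ : ℝ, ξ = -1 ∨ ξ = 1 →
        ENNReal.ofReal (1 / 2 - ε) * P A ≤ P {ω | H ω = ξ} ∧
          P {ω | H ω = ξ} ≤ 2⁻¹ * P A) ∧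
      -- (H7)
      ∑' n : ℕ, eLpNorm (F.mdiff H n) 1 P ≤ 6 * P A := by
  classical
  obtain ⟨ℓ, hAl'⟩ := Set.mem_iUnion.1 hA
  have hAl : A ∈ F.part ℓ := hAl'
  -- numerics
  have hεlt : (2:ℝ) ^ (-(k:ℝ)) < ε := by
    have h1 : -(k:ℝ) < Real.logb 2 ε := by linarith
    calc (2:ℝ) ^ (-(k:ℝ)) < 2 ^ Real.logb 2 ε :=
          (Real.rpow_lt_rpow_left_iff one_lt_two).2 h1
      _ = ε := Real.rpow_logb two_pos (by norm_num) hε0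
  have hk0 : k ≠ 0 := by
    rintro rfl
    norm_num at hεlt
    linarith
  have hkε : ((2:ℝ≥0∞)⁻¹)^k < ENNReal.ofReal ε := by
    have h2 : ((2:ℝ)^(k:ℕ))⁻¹ = (2:ℝ)^(-(k:ℝ)) := by
      rw [Real.rpow_neg (by norm_num), Real.rpow_natCast]
    have h3 : ((2:ℝ≥0∞)⁻¹)^k = ENNReal.ofReal (((2:ℝ)^(k:ℕ))⁻¹) := by
      rw [ENNReal.ofReal_inv_of_pos (by positivity), ENNReal.ofReal_pow (by norm_num),
        ENNReal.ofReal_ofNat, ENNReal.inv_pow]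
    rw [h3]
    exact (ENNReal.ofReal_lt_ofReal_iff hε0).2 (h2 ▸ hεlt)
  obtain ⟨n₀, hn₀⟩ := exists_small_level F A ℓ hAl hk0 hkε (by linarith) hε0.le hbig
  -- the construction
  set R : Set Ω := chD F A ℓ hAl n₀ with hRdef
  set Sp : Set Ω := chS F A ℓ hAl n₀ with hSpdef
  set Em : Set Ω := A \ (Sp ∪ R) with hEmdef
  obtain ⟨hRpart, hRA, hSpFilt, hSpA, hSpR, hinv1, hinv2⟩ := chain_inv F A ℓ hAl n₀
  have hRmeas : MeasurableSet R := F.meas _ _ hRpart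
  have hAmeas : MeasurableSet A := F.meas _ _ hAl
  have hSpMeas : MeasurableSet Sp := filt_le F (ℓ + n₀) _ hSpFilt
  have hEmMeas : MeasurableSet Em := hAmeas.diff (hSpMeas.union hRmeas)
  set t : ℝ := (P A).toReal with htdef
  set a : ℝ := (P Sp).toReal with hadef
  set r : ℝ := (P R).toReal with hrdef
  set e : ℝ := (P Em).toReal with hedef
  have htpos : 0 < t := toReal_pos F hAl
  have hrpos : 0 < r := toReal_pos F hRpart
  have hanonneg : 0 ≤ a := ENNReal.toReal_nonneg
  have henonneg : 0 ≤ e := ENNReal.toReal_nonneg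
  have hPSpR : P (Sp ∪ R) = P Sp + P R :=
    measure_union (Set.disjoint_iff_inter_eq_empty.2 hSpR) hRmeas
  have hPdecomp : P Sp + P R + P Em = P A := by
    rw [← hPSpR, ← measure_union _ hEmMeas, Set.union_diff_cancel (Set.union_subset hSpA hRA)]
    exact Set.disjoint_sdiff_right
  have hdecompR : a + r + e = t := by
    rw [hadef, hrdef, hedef, htdef, ← ENNReal.toReal_add (measure_ne_top P Sp) (measure_ne_top P R),
      ← ENNReal.toReal_add (by finiteness) (measure_ne_top P Em), hPdecomp]
  have hhalf : (2⁻¹ * P A).toReal = t / 2 := by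
    rw [ENNReal.toReal_mul, htdef]
    norm_num
    ring
  have ha2 : a ≤ t / 2 := by
    rw [← hhalf]
    exact ENNReal.toReal_mono (by finiteness) hinv1
  have hs2 : t / 2 ≤ a + r := by
    rw [← hhalf, hadef, hrdef, ← ENNReal.toReal_add (measure_ne_top P Sp) (measure_ne_top P R)]
    exact ENNReal.toReal_mono (by finiteness) hinv2
  set c : ℝ := (e - a) / r with hcdef
  have habs_ea : |e - a| ≤ r := by
    rw [abs_le]
    constructor <;> [linarith; linarith]
  have hcabs : |c| ≤ 1 := by
    rw [hcdef, abs_div, abs_of_pos hrpos, div_le_one hrpos]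
    exact habs_ea
  set H : Ω → ℝ := fun ω => Sp.indicator (fun _ => (1:ℝ)) ω + Em.indicator (fun _ => (-1:ℝ)) ω
    + R.indicator (fun _ => c) ω with hHdef
  -- membership facts
  have hSpnotEm : ∀ ω ∈ Sp, ω ∉ Em := fun ω hω hEm => hEm.2 (Or.inl hω)
  have hRnotEm : ∀ ω ∈ R, ω ∉ Em := fun ω hω hEm => hEm.2 (Or.inr hω)
  have hSpnotR : ∀ ω ∈ Sp, ω ∉ R := fun ω hω hR => by
    have : ω ∈ Sp ∩ R := ⟨hω, hR⟩
    rw [hSpR] at this; exact this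
  have hHSp : ∀ ω ∈ Sp, H ω = 1 := by
    intro ω hω
    rw [hHdef]
    simp only
    rw [Set.indicator_of_mem hω, Set.indicator_of_notMem (hSpnotEm ω hω),
      Set.indicator_of_notMem (hSpnotR ω hω)]
    ring
  have hHEm : ∀ ω ∈ Em, H ω = -1 := by
    intro ω hω
    rw [hHdef]
    simp only
    rw [Set.indicator_of_mem hω, Set.indicator_of_notMem (fun h => hSpnotEm ω h hω),
      Set.indicator_of_notMem (fun h => hRnotEm ω h hω)]
    ring
  have hHR : ∀ ω ∈ R, H ω = c := by
    intro ω hω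
    rw [hHdef]
    simp only
    rw [Set.indicator_of_mem hω, Set.indicator_of_notMem (fun h => hSpnotR ω h hω),
      Set.indicator_of_notMem (fun h => hRnotEm ω hω h)]
    ring
  have hH0 : ∀ ω, ω ∉ A → H ω = 0 := by
    intro ω hω
    rw [hHdef]
    simp only
    rw [Set.indicator_of_notMem (fun h => hω (hSpA h)),
      Set.indicator_of_notMem (fun h => hω h.1),
      Set.indicator_of_notMem (fun h => hω (hRA h))]
    ring
  have hHabs : ∀ ω, |H ω| ≤ 1 := by
    intro ω
    by_cases h1 : ω ∈ Sp
    · rw [hHSp ω h1]; norm_num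
    · by_cases h2 : ω ∈ Em
      · rw [hHEm ω h2]; norm_num
      · by_cases h3 : ω ∈ R
        · rw [hHR ω h3]; exact hcabs
        · by_cases h4 : ω ∈ A
          · exfalso
            exact h2 ⟨h4, fun h => h.elim h1 h3⟩
          · rw [hH0 ω h4]; norm_num
  have Hint : Integrable H P := by
    exact (((integrable_const _).indicator hSpMeas).add
      ((integrable_const _).indicator hEmMeas)).add ((integrable_const _).indicator hRmeas)
  have hI1 : Integrable (Sp.indicator (fun _ => (1:ℝ))) P := (integrable_const _).indicator hSpMeas
  have hI2 : Integrable (Em.indicator (fun _ => (-1:ℝ))) P := (integrable_const _).indicator hEmMeas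
  have hI3 : Integrable (R.indicator (fun _ => c)) P := (integrable_const _).indicator hRmeas
  have hHint0 : ∫ ω, H ω ∂P = 0 := by
    have h1 : ∫ ω, Sp.indicator (fun _ => (1:ℝ)) ω ∂P = a := by
      rw [integral_indicator_const _ hSpMeas, measureReal_def, smul_eq_mul, mul_one, hadef]
    have h2 : ∫ ω, Em.indicator (fun _ => (-1:ℝ)) ω ∂P = -e := by
      rw [integral_indicator_const _ hEmMeas, measureReal_def, smul_eq_mul, hedef]
      ring
    have h3 : ∫ ω, R.indicator (fun _ => c) ω ∂P = c * r := by
      rw [integral_indicator_const _ hRmeas, measureReal_def, smul_eq_mul, hrdef]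
      ring
    have hsum : ∫ ω, H ω ∂P = a + -e + c * r := by
      calc ∫ ω, H ω ∂P
          = (∫ ω, (Sp.indicator (fun _ => (1:ℝ)) ω + Em.indicator (fun _ => (-1:ℝ)) ω) ∂P)
            + ∫ ω, R.indicator (fun _ => c) ω ∂P := integral_add (hI1.add hI2) hI3
        _ = (∫ ω, Sp.indicator (fun _ => (1:ℝ)) ω ∂P)
            + (∫ ω, Em.indicator (fun _ => (-1:ℝ)) ω ∂P)
            + ∫ ω, R.indicator (fun _ => c) ω ∂P := by rw [integral_add hI1 hI2]
        _ = a + -e + c * r := by rw [h1, h2, h3]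
    rw [hsum, hcdef, div_mul_cancel₀ _ hrpos.ne']
    ring
  have hMeasFilt : Measurable[F.filt (ℓ + n₀)] H := by
    have hRfilt : MeasurableSet[F.filt (ℓ + n₀)] R :=
      MeasurableSpace.measurableSet_generateFrom hRpart
    have hAfilt : MeasurableSet[F.filt (ℓ + n₀)] A :=
      meas_filt_of_le F (Nat.le_add_right ℓ n₀) hAl
    have hEmfilt : MeasurableSet[F.filt (ℓ + n₀)] Em :=
      hAfilt.diff (hSpFilt.union hRfilt)
    exact (((@measurable_const ℝ Ω _ (F.filt (ℓ + n₀)) _).indicator hSpFilt).add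
      ((@measurable_const ℝ Ω _ (F.filt (ℓ + n₀)) _).indicator hEmfilt)).add
      ((@measurable_const ℝ Ω _ (F.filt (ℓ + n₀)) _).indicator hRfilt)
  refine ⟨H, ae_of_all _ hHabs, ?_, ⟨ℓ + n₀, hMeasFilt⟩, ?_, ?_, ?_, ?_⟩
  · -- support
    intro ω hω
    by_contra hωA
    exact hω (hH0 ω hωA)
  · -- H4
    have hind : A.indicator H = H := by
      funext ω
      by_cases hω : ω ∈ A
      · rw [Set.indicator_of_mem hω]
      · rw [Set.indicator_of_notMem hω, hH0 ω hω]
    rw [← integral_indicator hAmeas, hind, hHint0]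
  · -- H5
    have hsub : {ω | |H ω| ≠ 1} ∩ A ⊆ R := by
      rintro ω ⟨hωH, hωA⟩
      by_contra hωR
      by_cases h1 : ω ∈ Sp
      · exact hωH (by rw [hHSp ω h1]; norm_num)
      · have h2 : ω ∈ Em := ⟨hωA, fun h => h.elim h1 hωR⟩
        exact hωH (by rw [hHEm ω h2]; norm_num)
    exact le_trans (measure_mono hsub) hn₀.le
  · -- H6
    intro ξ hξ
    have hfinε : ENNReal.ofReal ε * P A ≠ ⊤ := ENNReal.mul_ne_top ENNReal.ofReal_ne_top (measure_ne_top P A)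
    have hfinhalf : 2⁻¹ * P A ≠ ⊤ := ENNReal.mul_ne_top (by norm_num) (measure_ne_top P A)
    have hco : ENNReal.ofReal (1/2 - ε) * P A + ENNReal.ofReal ε * P A = 2⁻¹ * P A := by
      rw [← add_mul, ← ENNReal.ofReal_add (by linarith) hε0.le]
      norm_num
      rw [show ((1:ℝ)/2) = (2:ℝ)⁻¹ by norm_num, ENNReal.ofReal_inv_of_pos (by norm_num),
        ENNReal.ofReal_ofNat]
    have hRle : P R ≤ ENNReal.ofReal ε * P A := hn₀.le
    have hlow : ∀ S : Set Ω, 2⁻¹ * P A ≤ P S + P R →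
        ENNReal.ofReal (1/2 - ε) * P A ≤ P S := by
      intro S hS
      have h1 : ENNReal.ofReal (1/2-ε) * P A + ENNReal.ofReal ε * P A
          ≤ P S + ENNReal.ofReal ε * P A := by
        rw [hco]
        exact hS.trans (add_le_add_right hRle _)
      exact (ENNReal.add_le_add_iff_right hfinε).1 h1
    have hAsplit : P A = 2⁻¹ * P A + 2⁻¹ * P A := by
      rw [← two_mul, ← mul_assoc, ENNReal.mul_inv_cancel two_ne_zero (by norm_num), one_mul]
    have hSpR2 : 2⁻¹ * P A ≤ P Sp + P R := hinv2
    have hEmR2 : 2⁻¹ * P A ≤ P Em + P R := by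
      have h1 : 2⁻¹ * P A + 2⁻¹ * P A ≤ 2⁻¹ * P A + (P Em + P R) := by
        calc 2⁻¹ * P A + 2⁻¹ * P A = P A := hAsplit.symm
          _ = P Sp + P R + P Em := hPdecomp.symm
          _ ≤ 2⁻¹ * P A + P R + P Em := by
              exact add_le_add_left (add_le_add_left hinv1 _) _
          _ = 2⁻¹ * P A + (P Em + P R) := by ring
      exact (ENNReal.add_le_add_iff_left hfinhalf).1 h1
    have hEmUp : P Em ≤ 2⁻¹ * P A := by
      have h1 : P Em + 2⁻¹ * P A ≤ 2⁻¹ * P A + 2⁻¹ * P A := by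
        calc P Em + 2⁻¹ * P A ≤ P Em + (P Sp + P R) := add_le_add_right hinv2 _
          _ = P Sp + P R + P Em := by ring
          _ = P A := hPdecomp
          _ = 2⁻¹ * P A + 2⁻¹ * P A := hAsplit
      have h2 : P Em + 2⁻¹ * P A ≤ 2⁻¹ * P A + 2⁻¹ * P A := h1
      rw [add_comm (2⁻¹ * P A) (2⁻¹ * P A)] at h2
      exact (ENNReal.add_le_add_iff_right hfinhalf).1 h2
    have hmemA : ∀ ω, ω ∈ A → ω ∈ Sp ∨ ω ∈ Em ∨ ω ∈ R := by
      intro ω hω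
      by_cases h1 : ω ∈ Sp
      · exact Or.inl h1
      · by_cases h3 : ω ∈ R
        · exact Or.inr (Or.inr h3)
        · exact Or.inr (Or.inl ⟨hω, fun h => h.elim h1 h3⟩)
    have hsetSp : c ≠ 1 → {ω | H ω = 1} = Sp := by
      intro hc
      ext ω
      simp only [Set.mem_setOf_eq]
      constructor
      · intro hω
        by_cases hA' : ω ∈ A
        · rcases hmemA ω hA' with h | h | h
          · exact h
          · rw [hHEm ω h] at hω; norm_num at hω
          · rw [hHR ω h] at hω; exact absurd hω hc
        · rw [hH0 ω hA'] at hω; norm_num at hω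
      · intro hω; exact hHSp ω hω
    have hsetSpR : c = 1 → {ω | H ω = 1} = Sp ∪ R := by
      intro hc
      ext ω
      simp only [Set.mem_setOf_eq, Set.mem_union]
      constructor
      · intro hω
        by_cases hA' : ω ∈ A
        · rcases hmemA ω hA' with h | h | h
          · exact Or.inl h
          · rw [hHEm ω h] at hω; norm_num at hω
          · exact Or.inr h
        · rw [hH0 ω hA'] at hω; norm_num at hω
      · rintro (h | h)
        · exact hHSp ω h
        · rw [hHR ω h, hc]
    have hsetEm : c ≠ -1 → {ω | H ω = -1} = Em := by
      intro hc
      ext ω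
      simp only [Set.mem_setOf_eq]
      constructor
      · intro hω
        by_cases hA' : ω ∈ A
        · rcases hmemA ω hA' with h | h | h
          · rw [hHSp ω h] at hω; norm_num at hω
          · exact h
          · rw [hHR ω h] at hω; exact absurd hω hc
        · rw [hH0 ω hA'] at hω; norm_num at hω
      · intro hω; exact hHEm ω hω
    have hsetEmR : c = -1 → {ω | H ω = -1} = Em ∪ R := by
      intro hc
      ext ω
      simp only [Set.mem_setOf_eq, Set.mem_union]
      constructor
      · intro hω
        by_cases hA' : ω ∈ A
        · rcases hmemA ω hA' with h | h | h
          · rw [hHSp ω h] at hω; norm_num at hω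
          · exact Or.inl h
          · exact Or.inr h
        · rw [hH0 ω hA'] at hω; norm_num at hω
      · rintro (h | h)
        · exact hHEm ω h
        · rw [hHR ω h, hc]
    have hPEmR : P (Em ∪ R) = P Em + P R := by
      apply measure_union _ hRmeas
      rw [Set.disjoint_left]
      exact fun ω hω hR => hRnotEm ω hR hω
    rcases hξ with rfl | rfl
    · by_cases hc : c = -1
      · rw [hsetEmR hc]
        constructor
        · exact (hlow Em hEmR2).trans (measure_mono Set.subset_union_left)
        · have hear : e - a = -1 * r := by
            rw [← hc, hcdef, div_mul_cancel₀ _ hrpos.ne']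
          have hto : (P (Em ∪ R)).toReal ≤ (2⁻¹ * P A).toReal := by
            rw [hPEmR, ENNReal.toReal_add (measure_ne_top P Em) (measure_ne_top P R),
              ← hedef, ← hrdef, hhalf]
            linarith
          exact (ENNReal.toReal_le_toReal (by finiteness) hfinhalf).1 hto
      · rw [hsetEm hc]
        exact ⟨hlow Em hEmR2, hEmUp⟩
    · by_cases hc : c = 1
      · rw [hsetSpR hc]
        constructor
        · exact (hlow Sp hSpR2).trans (measure_mono Set.subset_union_left)
        · have hear : e - a = 1 * r := by
            rw [← hc, hcdef, div_mul_cancel₀ _ hrpos.ne']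
          have hto : (P (Sp ∪ R)).toReal ≤ (2⁻¹ * P A).toReal := by
            rw [hPSpR, ENNReal.toReal_add (measure_ne_top P Sp) (measure_ne_top P R),
              ← hadef, ← hrdef, hhalf]
            linarith
          exact (ENNReal.toReal_le_toReal (by finiteness) hfinhalf).1 hto
      · rw [hsetSp hc]
        exact ⟨hlow Sp hSpR2, hinv1⟩

  · -- H7
    have hconst : ∀ n, n ≤ n₀ → ∀ C ∈ F.part (ℓ + n), C ≠ chD F A ℓ hAl n →
        ∃ v, ∀ x ∈ C, H x = v := by
      intro n hn C hC hCD
      by_cases hne : (A ∩ C).Nonempty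
      · have hCA : C ⊆ A := subset_of_inter F (Nat.le_add_right ℓ n) hAl hC hne
        obtain ⟨𝒮, h𝒮, hrep0⟩ := filt_rep F (chain_inv F A ℓ hAl n).2.2.1
        have hrep : chS F A ℓ hAl n = ⋃₀ ↑𝒮 := hrep0
        by_cases hmem : C ∈ 𝒮
        · refine ⟨1, fun x hx => hHSp x ?_⟩
          have hxS : x ∈ chS F A ℓ hAl n := by
            rw [hrep]
            exact ⟨C, Finset.mem_coe.2 hmem, hx⟩
          exact chS_mono F A ℓ hAl hn hxS
        · have hCS : C ∩ chS F A ℓ hAl n = ∅ := by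
            rw [hrep, Set.eq_empty_iff_forall_notMem]
            rintro x ⟨hxC, C', hC', hxC'⟩
            have hCC' : C = C' := by
              rcases eq_or_disj F hC (h𝒮 hC') with h | h
              · exact h
              · exfalso
                have : x ∈ C ∩ C' := ⟨hxC, hxC'⟩
                simp [h] at this
            exact hmem (hCC' ▸ Finset.mem_coe.1 hC')
          have hCDdisj : C ∩ chD F A ℓ hAl n = ∅ := by
            rcases eq_or_disj F hC (chain_inv F A ℓ hAl n).1 with h | h
            · exact absurd h hCD
            · exact h
          refine ⟨-1, fun x hx => hHEm x ⟨hCA hx, ?_⟩⟩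
          rintro (hxSp | hxR)
          · rcases chS_sub F A ℓ hAl hn hxSp with h | h
            · have : x ∈ C ∩ chS F A ℓ hAl n := ⟨hx, h⟩
              simp [hCS] at this
            · have : x ∈ C ∩ chD F A ℓ hAl n := ⟨hx, h⟩
              simp [hCDdisj] at this
          · have : x ∈ C ∩ chD F A ℓ hAl n := ⟨hx, chD_mono F A ℓ hAl hn hxR⟩
            simp [hCDdisj] at this
      · refine ⟨0, fun x hx => hH0 x fun hxA => hne ⟨x, hxA, hx⟩⟩
    have hzero_low : ∀ m, m ≤ ℓ → P[H | F.filt m] =ᵐ[P] (fun _ => (0:ℝ)) := by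
      intro m hm
      refine (condexp_eq_pavg F m Hint).trans ?_
      have hfz : pavg F m H = fun _ => (0:ℝ) :=
        funext (pavg_zero F A ℓ hm hAl (fun x hx => hH0 x hx) hHint0)
      rw [hfz]
    have hhigh : ∀ m, ℓ + n₀ ≤ m → P[H | F.filt m] = H := fun m hm =>
      condExp_of_stronglyMeasurable (filt_le F m)
        ((hMeasFilt.mono (filt_mono F hm) le_rfl).stronglyMeasurable) Hint
    have hu_low : ∀ m, m + 1 ≤ ℓ → eLpNorm (F.mdiff H m) 1 P = 0 := by
      intro m hm
      have h1 : F.mdiff H m =ᵐ[P] (fun _ => (0:ℝ)) := by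
        have h2 := (hzero_low (m+1) hm).sub (hzero_low m (by omega))
        exact h2.trans (ae_of_all _ (fun x => by simp))
      rw [eLpNorm_congr_ae h1]
      exact eLpNorm_zero'
    have hu_high : ∀ m, ℓ + n₀ ≤ m → eLpNorm (F.mdiff H m) 1 P = 0 := by
      intro m hm
      have h1 : F.mdiff H m = fun _ => (0:ℝ) := by
        rw [Paper.FilteredAtomic.mdiff, hhigh (m+1) (by omega), hhigh m hm]
        funext x
        simp
      rw [h1]
      exact eLpNorm_zero'
    have hu_mid : ∀ n, n < n₀ → eLpNorm (F.mdiff H (ℓ + n)) 1 P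
        ≤ 4 * (P (chD F A ℓ hAl n) - P (chD F A ℓ hAl (n+1))) := by
      intro n hn
      have hDn : chD F A ℓ hAl n ∈ F.part (ℓ + n) := (chain_inv F A ℓ hAl n).1
      have hDn1 : chD F A ℓ hAl (n+1) ∈ F.part ((ℓ + n) + 1) := (chain_inv F A ℓ hAl (n+1)).1
      have hsub' : chD F A ℓ hAl (n+1) ⊆ chD F A ℓ hAl n := (chain_rel F A ℓ hAl n).1
      have hcon : ∀ C ∈ F.part (ℓ+n), C ≠ chD F A ℓ hAl n → ∃ v, ∀ x ∈ C, H x = v :=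
        hconst n (le_of_lt hn)
      have hcon' : ∀ C ∈ F.part ((ℓ+n)+1), C ≠ chD F A ℓ hAl (n+1) →
          ∃ v, ∀ x ∈ C, H x = v := fun C hC hne => hconst (n+1) hn C hC hne
      have heq : F.mdiff H (ℓ + n) =ᵐ[P] (pavg F ((ℓ+n)+1) H - pavg F (ℓ+n) H) := by
        have h1 := condexp_eq_pavg F ((ℓ+n)+1) Hint
        have h2 := condexp_eq_pavg F (ℓ+n) Hint
        have h3 := h1.sub h2
        simpa [Paper.FilteredAtomic.mdiff] using h3
      rw [eLpNorm_congr_ae heq]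
      exact delta_bound F hDn hDn1 hsub' Hint hHabs hcon hcon'
    have hsupport : ∀ m ∉ Finset.Ico ℓ (ℓ + n₀), eLpNorm (F.mdiff H m) 1 P = 0 := by
      intro m hm
      rw [Finset.mem_Ico] at hm
      push_neg at hm
      by_cases h1 : m < ℓ
      · exact hu_low m h1
      · exact hu_high m (hm (by omega))
    calc ∑' m, eLpNorm (F.mdiff H m) 1 P
        = ∑ m ∈ Finset.Ico ℓ (ℓ + n₀), eLpNorm (F.mdiff H m) 1 P := tsum_eq_sum hsupport
      _ = ∑ n ∈ Finset.range n₀, eLpNorm (F.mdiff H (ℓ + n)) 1 P := by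
          rw [Finset.sum_Ico_eq_sum_range]
          simp
      _ ≤ ∑ n ∈ Finset.range n₀, 4 * (P (chD F A ℓ hAl n) - P (chD F A ℓ hAl (n+1))) :=
          Finset.sum_le_sum fun n hn => hu_mid n (Finset.mem_range.1 hn)
      _ = 4 * ∑ n ∈ Finset.range n₀, (P (chD F A ℓ hAl n) - P (chD F A ℓ hAl (n+1))) :=
          (Finset.mul_sum _ _ _).symm
      _ = 4 * (P (chD F A ℓ hAl 0) - P (chD F A ℓ hAl n₀)) := by
          rw [telescope (fun n => P (chD F A ℓ hAl n))
            (fun n => measure_mono (chain_rel F A ℓ hAl n).1)]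
      _ ≤ 4 * P A := by
          rw [chD_zero]
          exact mul_le_mul_right tsub_le_self _
      _ ≤ 6 * P A := mul_le_mul_left (by norm_num) _
end
end

section
/- Let (Ω, F, (F_n), P) be a filtered atomic probability space in which distinct atoms of 𝒜 have distinct measures, with associated collections 𝒜 and ℰ. Let 0 < ε < 1/2, let k ∈ ℕ with k > −log₂(ε), and let Y_0 = A ∈ 𝒜 satisfy P((G_k(ℰ, A))*) > (1 − ε/2) P(A). Let 0 < m < k and let {Y_j}_{j=0}^m satisfy condition D_m(Y_0). Then: (a) if ∑_{j=1}^m P(U_j*) + P((G_1(ℰ, Y_m))*) > (1/2) P(A), there exists Y_{m+1} ∈ G_1(ℰ, Y_m) such that {Y_j}_{j=0}^{m+1} satisfies condition D_{m+1}(Y_0); (b) if ∑_{j=1}^m P(U_j*) + P((G_1(ℰ, Y_m))*) ≤ (1/2) P(A), there exists W ∈ 𝒜 with W ⊊ Y_m such that, setting U_{m+1} = {B ∈ G_1(ℰ, Y_m) : B ≺ W} and Y_{m+1} = Y_m \ U_{m+1}*, one has (1/2 − ε) P(A) ≤ ∑_{j=1}^{m+1} P(U_j*) ≤ (1/2) P(A)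 and P(Y_{m+1}) ≤ ε P(A). -/
open MeasureTheory ENNReal

noncomputable section

section Aux

open Paper Set

variable {Ω : Type*} [m0 : MeasurableSpace Ω] {P : Measure Ω}

namespace Paper.FilteredAtomic

variable (F : Paper.FilteredAtomic Ω P)

theorem exists_ancestor' : ∀ d p, ∀ B ∈ F.part (p + d), ∃ C ∈ F.part p, B ⊆ C := by
  intro d
  induction d with
  | zero => exact fun p B hB => ⟨B, hB, subset_rfl⟩
  | succ d ih =>
    intro p B hB
    obtain ⟨C, hC, hBC⟩ := F.refined (p + d) B hB
    obtain ⟨D, hD, hCD⟩ := ih p C hC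
    exact ⟨D, hD, hBC.trans hCD⟩

theorem exists_ancestor {p q : ℕ} (hpq : p ≤ q) {B : Set Ω} (hB : B ∈ F.part q) :
    ∃ C ∈ F.part p, B ⊆ C := by
  obtain ⟨d, rfl⟩ := Nat.exists_eq_add_of_le hpq
  exact F.exists_ancestor' d p B hB

theorem atom_nonempty {n : ℕ} {A : Set Ω} (hA : A ∈ F.part n) : A.Nonempty :=
  nonempty_of_measure_ne_zero (F.pos n A hA).ne'

theorem nested {p q : ℕ} {A B : Set Ω} (hA : A ∈ F.part p) (hB : B ∈ F.part q)
    (hpq : p ≤ q) (hne : (A ∩ B).Nonempty) : B ⊆ A := by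
  obtain ⟨C, hC, hBC⟩ := F.exists_ancestor hpq hB
  have hAC : A = C := by
    by_contra hne'
    have hdisj : Disjoint A C := F.disj p hA hC hne'
    obtain ⟨x, hxA, hxB⟩ := hne
    exact (Set.disjoint_left.1 hdisj hxA (hBC hxB))
  exact hAC ▸ hBC

theorem mem_atoms_iff {A : Set Ω} : A ∈ F.atoms ↔ ∃ n, A ∈ F.part n := by
  simp [Paper.FilteredAtomic.atoms]

theorem atoms_countable : F.atoms.Countable :=
  Set.countable_iUnion fun n => (F.part n).countable_toSet

theorem atoms_meas {A : Set Ω} (hA : A ∈ F.atoms) : MeasurableSet A := by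
  obtain ⟨n, hn⟩ := F.mem_atoms_iff.1 hA
  exact F.meas n A hn

theorem atoms_pos {A : Set Ω} (hA : A ∈ F.atoms) : 0 < P A := by
  obtain ⟨n, hn⟩ := F.mem_atoms_iff.1 hA
  exact F.pos n A hn

theorem atoms_nested {A B : Set Ω} (hA : A ∈ F.atoms) (hB : B ∈ F.atoms)
    (hne : (A ∩ B).Nonempty) : A ⊆ B ∨ B ⊆ A := by
  obtain ⟨p, hp⟩ := F.mem_atoms_iff.1 hA
  obtain ⟨q, hq⟩ := F.mem_atoms_iff.1 hB
  rcases le_total p q with h | h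
  · exact Or.inr (F.nested hp hq h hne)
  · exact Or.inl (F.nested hq hp h (Set.inter_comm A B ▸ hne))

theorem eColl_subset_atoms : F.eColl ⊆ F.atoms := fun _ h => h.1

variable (hdist : ∀ A ∈ F.atoms, ∀ B ∈ F.atoms, P A = P B → A = B)

include hdist

theorem persist {p : ℕ} {B : Set Ω} (hp : B ∈ F.part p) (hp1 : B ∈ F.part (p + 1)) :
    B ∈ F.starSets := by
  have h1 : P B ≤ P (F.star p B) := F.star_max p B hp B hp1 subset_rfl
  have h2 : P (F.star p B) ≤ P B := measure_mono (F.star_sub p B hp)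
  have hmem : F.star p B ∈ F.atoms := F.mem_atoms_iff.2 ⟨p + 1, F.star_mem p B hp⟩
  have : F.star p B = B := hdist _ hmem _ (F.mem_atoms_iff.2 ⟨p, hp⟩) (le_antisymm h2 h1)
  exact ⟨p, B, hp, this.symm⟩

theorem level_unique {p q : ℕ} {B : Set Ω} (hB : B ∈ F.eColl)
    (hp : B ∈ F.part p) (hq : B ∈ F.part q) : p = q := by
  have key : ∀ p q : ℕ, p < q → B ∈ F.part p → B ∈ F.part q → False := by
    intro p q hpq hp hq
    obtain ⟨C, hC, hBC⟩ := F.exists_ancestor (Nat.succ_le_of_lt hpq) hq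
    have hCB : C ⊆ B := F.nested hp hC (Nat.le_succ p)
      ⟨(F.atom_nonempty hp).choose, (F.atom_nonempty hp).choose_spec,
        hBC (F.atom_nonempty hp).choose_spec⟩
    have : B ∈ F.part (p + 1) := by
      have : B = C := Set.Subset.antisymm hBC hCB
      exact this ▸ hC
    exact hB.2 (F.persist hdist hp this)
  rcases lt_trichotomy p q with h | h | h
  · exact absurd (key p q h hp hq) not_false
  · exact h
  · exact absurd (key q p h hq hp) not_false

theorem prec_irrefl {B : Set Ω} (hB : B ∈ F.eColl) : ¬ Paper.Prec F B B := by
  rintro ⟨l, m, hl, hm, h⟩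
  have : l = m := F.level_unique hdist hB hl hm
  rcases h with h | ⟨_, h⟩
  · omega
  · exact lt_irrefl _ h

theorem prec_trans {B₁ B₂ B₃ : Set Ω} (h2 : B₂ ∈ F.eColl)
    (h12 : Paper.Prec F B₁ B₂) (h23 : Paper.Prec F B₂ B₃) : Paper.Prec F B₁ B₃ := by
  obtain ⟨l₁, m₁, hl₁, hm₁, h₁⟩ := h12
  obtain ⟨l₂, m₂, hl₂, hm₂, h₂⟩ := h23
  have hm : m₁ = l₂ := F.level_unique hdist h2 hm₁ hl₂
  subst hm
  refine ⟨l₁, m₂, hl₁, hm₂, ?_⟩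
  rcases h₁ with h₁ | ⟨rfl, h₁⟩ <;> rcases h₂ with h₂ | ⟨rfl, h₂⟩
  · exact Or.inl (h₁.trans h₂)
  · exact Or.inl h₁
  · exact Or.inl h₂
  · exact Or.inr ⟨rfl, h₂.trans h₁⟩

theorem prec_total {B₁ B₂ : Set Ω} (h1 : B₁ ∈ F.atoms) (h2 : B₂ ∈ F.atoms)
    (hne : B₁ ≠ B₂) : Paper.Prec F B₁ B₂ ∨ Paper.Prec F B₂ B₁ := by
  obtain ⟨p, hp⟩ := F.mem_atoms_iff.1 h1
  obtain ⟨q, hq⟩ := F.mem_atoms_iff.1 h2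
  rcases lt_trichotomy p q with h | rfl | h
  · exact Or.inl ⟨p, q, hp, hq, Or.inl h⟩
  · have : P B₁ ≠ P B₂ := fun hP => hne (hdist _ h1 _ h2 hP)
    rcases this.lt_or_gt with h | h
    · exact Or.inr ⟨p, p, hq, hp, Or.inr ⟨rfl, h⟩⟩
    · exact Or.inl ⟨p, p, hp, hq, Or.inr ⟨rfl, h⟩⟩
  · exact Or.inr ⟨q, p, hq, hp, Or.inl h⟩

end Paper.FilteredAtomic

theorem Paper.G1_subset {R : Set (Set Ω)} {S : Set Ω} : Paper.G1 R S ⊆ R := fun _ h => h.1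

theorem Paper.G1_ssubset {R : Set (Set Ω)} {S B : Set Ω} (h : B ∈ Paper.G1 R S) : B ⊂ S :=
  h.2.1

theorem Paper.G1_eq_of_inter (F : Paper.FilteredAtomic Ω P) {S E Z : Set Ω}
    (hE : E ∈ Paper.G1 F.eColl S) (hZ : Z ∈ Paper.G1 F.eColl S)
    (hne : (E ∩ Z).Nonempty) : E = Z := by
  rcases F.atoms_nested (F.eColl_subset_atoms hE.1) (F.eColl_subset_atoms hZ.1) hne with h | h
  · exact hE.2.2 Z hZ.1 hZ.2.1 h
  · exact (hZ.2.2 E hE.1 hE.2.1 h).symm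

theorem Paper.Gk_subset_base {R : Set (Set Ω)} {A : Set Ω} :
    ∀ k, ∀ E ∈ Paper.Gk R k A, E ⊆ A := by
  intro k
  induction k with
  | zero => intro E hE; simp only [Paper.Gk, Set.mem_singleton_iff] at hE; exact hE ▸ subset_rfl
  | succ k ih =>
    intro E hE
    simp only [Paper.Gk, Set.mem_iUnion] at hE
    obtain ⟨J, hJ, hE⟩ := hE
    exact (Paper.G1_ssubset hE).subset.trans (ih J hJ)

theorem Paper.Gk_subset_coll {R : Set (Set Ω)} {A : Set Ω} (k : ℕ) :
    Paper.Gk R (k + 1) A ⊆ R := by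
  intro E hE
  simp only [Paper.Gk, Set.mem_iUnion] at hE
  obtain ⟨J, _, hE⟩ := hE
  exact hE.1

theorem Paper.Gk_chain (F : Paper.FilteredAtomic Ω P) {S Z : Set Ω}
    (hZ : Z ∈ Paper.G1 F.eColl S) :
    ∀ k, ∀ E ∈ Paper.Gk F.eColl (k + 1) S, (E ∩ Z).Nonempty →
      E ∈ Paper.Gk F.eColl k Z := by
  intro k
  induction k with
  | zero =>
    intro E hE hne
    have hE' : E ∈ Paper.G1 F.eColl S := by
      simpa only [Paper.Gk, Set.mem_iUnion, exists_prop, Set.mem_singleton_iff, exists_eq_left] using hE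
    simp only [Paper.Gk, Set.mem_singleton_iff]
    exact Paper.G1_eq_of_inter F hE' hZ hne
  | succ k ih =>
    intro E hE hne
    have hE' : ∃ J ∈ Paper.Gk F.eColl (k + 1) S, E ∈ Paper.G1 F.eColl J := by
      simpa only [Paper.Gk, Set.mem_iUnion, exists_prop] using hE
    obtain ⟨J, hJ, hEJ⟩ := hE'
    have hJZ : (J ∩ Z).Nonempty := hne.mono (Set.inter_subset_inter_left Z hEJ.2.1.subset)
    have := ih J hJ hJZ
    simp only [Paper.Gk, Set.mem_iUnion, exists_prop]
    exact ⟨J, this, hEJ⟩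

theorem Paper.Gk_exists_G1 {R : Set (Set Ω)} {S : Set Ω} :
    ∀ k, ∀ E ∈ Paper.Gk R (k + 1) S, ∃ J ∈ Paper.G1 R S, E ⊆ J := by
  intro k
  induction k with
  | zero =>
    intro E hE
    have hE' : E ∈ Paper.G1 R S := by
      simpa only [Paper.Gk, Set.mem_iUnion, exists_prop, Set.mem_singleton_iff, exists_eq_left] using hE
    exact ⟨E, hE', subset_rfl⟩
  | succ k ih =>
    intro E hE
    have hE' : ∃ J ∈ Paper.Gk R (k + 1) S, E ∈ Paper.G1 R J := by
      simpa only [Paper.Gk, Set.mem_iUnion, exists_prop] using hE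
    obtain ⟨J, hJ, hEJ⟩ := hE'
    obtain ⟨J', hJ', hJJ'⟩ := ih J hJ
    exact ⟨J', hJ', hEJ.2.1.subset.trans hJJ'⟩


theorem Paper.descend (F : Paper.FilteredAtomic Ω P) {A : Set Ω} {Y : ℕ → Set Ω} {k m : ℕ}
    (hmk : m < k) (hY0 : Y 0 = A)
    (hstep : ∀ j ∈ Finset.Icc 1 m, Y j ∈ Paper.G1 F.eColl (Y (j - 1))) :
    Y m \ ⋃₀ Paper.G1 F.eColl (Y m) ⊆ A \ ⋃₀ Paper.Gk F.eColl k A := by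
  have hmono : ∀ i j, i ≤ j → j ≤ m → Y j ⊆ Y i := by
    intro i j hij hjm
    induction j with
    | zero => simp [Nat.le_zero.1 hij]
    | succ j ihj =>
      rcases Nat.lt_or_ge i (j + 1) with h | h
      · have h1 : Y (j + 1) ⊆ Y j := by
          have := hstep (j + 1) (Finset.mem_Icc.2 ⟨Nat.le_add_left 1 j, hjm⟩)
          simpa using (Paper.G1_ssubset this).subset
        exact h1.trans (ihj (by omega) (by omega))
      · have : i = j + 1 := by omega
        simp [this]
  intro ω hω
  obtain ⟨hωY, hωG⟩ := hω
  have hωA : ω ∈ A := hY0 ▸ hmono 0 m (Nat.zero_le m) le_rfl hωY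
  refine ⟨hωA, ?_⟩
  rintro ⟨E, hE, hωE⟩
  have key : ∀ i, i ≤ m → E ∈ Paper.Gk F.eColl (k - i) (Y i) := by
    intro i
    induction i with
    | zero =>
      intro _
      rw [hY0]
      simpa using hE
    | succ i ihi =>
      intro hi
      have hEi : E ∈ Paper.Gk F.eColl (k - i) (Y i) := ihi (by omega)
      have hki : k - i = (k - (i + 1)) + 1 := by omega
      rw [hki] at hEi
      have hYi1 : Y (i + 1) ∈ Paper.G1 F.eColl (Y i) := by
        have := hstep (i + 1) (Finset.mem_Icc.2 ⟨by omega, hi⟩)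
        simpa using this
      exact Paper.Gk_chain F hYi1 _ E hEi ⟨ω, hωE, hmono (i + 1) m hi le_rfl hωY⟩
  have hEm := key m le_rfl
  have hkm : k - m = (k - m - 1) + 1 := by omega
  rw [hkm] at hEm
  obtain ⟨J, hJ, hEJ⟩ := Paper.Gk_exists_G1 _ E hEm
  exact hωG ⟨J, hJ, hEJ hωE⟩

end Aux

open MeasureTheory ENNReal in
/-- the greedy-algorithm inductive step, Lemma 5 of the paper. -/
theorem statement_4 {Ω : Type*} [m0 : MeasurableSpace Ω] (P : Measure Ω)
    [IsProbabilityMeasure P] (F : Paper.FilteredAtomic Ω P)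
    (hdist : ∀ A ∈ F.atoms, ∀ B ∈ F.atoms, P A = P B → A = B)
    (ε : ℝ) (hε0 : 0 < ε) (hε : ε < 1 / 2)
    (k : ℕ) (hk : -Real.logb 2 ε < (k : ℝ))
    (A : Set Ω) (hA : A ∈ F.atoms)
    (hbig : ENNReal.ofReal (1 - ε / 2) * P A < P (⋃₀ Paper.Gk F.eColl k A))
    (m : ℕ) (hm0 : 0 < m) (hmk : m < k)
    (Y : ℕ → Set Ω) (hD : Paper.CondD F A Y m) :
    -- (a)
    (2⁻¹ * P A <
        ∑ j ∈ Finset.Icc 1 m, P (⋃₀ Paper.Uset F Y j) + P (⋃₀ Paper.G1 F.eColl (Y m)) →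
      ∃ Z ∈ Paper.G1 F.eColl (Y m),
        Paper.CondD F A (Function.update Y (m + 1) Z) (m + 1)) ∧
    -- (b)
    (∑ j ∈ Finset.Icc 1 m, P (⋃₀ Paper.Uset F Y j) + P (⋃₀ Paper.G1 F.eColl (Y m)) ≤
        2⁻¹ * P A →
      ∃ W ∈ F.atoms, W ⊂ Y m ∧
        (ENNReal.ofReal (1 / 2 - ε) * P A ≤
            ∑ j ∈ Finset.Icc 1 m, P (⋃₀ Paper.Uset F Y j) +
              P (⋃₀ {B | B ∈ Paper.G1 F.eColl (Y m) ∧ Paper.Prec F B W}) ∧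
          ∑ j ∈ Finset.Icc 1 m, P (⋃₀ Paper.Uset F Y j) +
              P (⋃₀ {B | B ∈ Paper.G1 F.eColl (Y m) ∧ Paper.Prec F B W}) ≤ 2⁻¹ * P A ∧
          P (Y m \ ⋃₀ {B | B ∈ Paper.G1 F.eColl (Y m) ∧ Paper.Prec F B W}) ≤
            ENNReal.ofReal ε * P A)) := by
  classical
  unfold Paper.CondD at hD
  obtain ⟨hY0, hstep, hup, hlo⟩ := hD
  have hGe : Paper.G1 F.eColl (Y m) ⊆ F.eColl := Paper.G1_subset
  have hGa : Paper.G1 F.eColl (Y m) ⊆ F.atoms := fun B hB => (hGe hB).1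
  have hGcnt : (Paper.G1 F.eColl (Y m)).Countable := F.atoms_countable.mono hGa
  have hPA_fin : P A ≠ ∞ := measure_ne_top P A
  have hPA_pos : 0 < P A := F.atoms_pos hA
  have hhalf_fin : (2 : ℝ≥0∞)⁻¹ * P A ≠ ∞ := ENNReal.mul_ne_top (by simp) hPA_fin
  set G := Paper.G1 F.eColl (Y m) with hGdef
  set S₀ := ∑ j ∈ Finset.Icc 1 m, P (⋃₀ Paper.Uset F Y j) with hS₀def
  have hS₀fin : S₀ ≠ ∞ := ne_top_of_le_ne_top hhalf_fin hup
  constructor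
  · -- (a)
    intro ha
    set t := 2⁻¹ * P A - S₀ with htdef
    have hadd : S₀ + t = 2⁻¹ * P A := add_tsub_cancel_of_le hup
    set cset : Set Ω → Set Ω := fun Z => ⋃₀ {B | B ∈ G ∧ Paper.Prec F B Z} ∪ Z with hcset
    have hcmono : ∀ Z₁ ∈ G, ∀ Z₂ ∈ G, Paper.Prec F Z₁ Z₂ → cset Z₁ ⊆ cset Z₂ := by
      intro Z₁ h₁ Z₂ h₂ h12
      apply Set.union_subset
      · apply Set.sUnion_subset
        rintro B ⟨hBG, hBZ⟩
        refine Set.Subset.trans ?_ Set.subset_union_left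
        exact Set.subset_sUnion_of_mem ⟨hBG, F.prec_trans hdist (hGe h₁) hBZ h12⟩
      · refine Set.Subset.trans ?_ Set.subset_union_left
        exact Set.subset_sUnion_of_mem ⟨h₁, h12⟩
    have hcdir : ∀ Z₁ ∈ G, ∀ Z₂ ∈ G, cset Z₁ ⊆ cset Z₂ ∨ cset Z₂ ⊆ cset Z₁ := by
      intro Z₁ h₁ Z₂ h₂
      by_cases heq : Z₁ = Z₂
      · exact Or.inl (heq ▸ subset_rfl)
      · rcases F.prec_total hdist (hGa h₁) (hGa h₂) heq with h | h
        · exact Or.inl (hcmono _ h₁ _ h₂ h)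
        · exact Or.inr (hcmono _ h₂ _ h₁ h)
    haveI : Countable G := hGcnt.to_subtype
    have hdirG : Directed (· ⊆ ·) (fun Z : G => cset Z) := by
      rintro ⟨Z₁, h₁⟩ ⟨Z₂, h₂⟩
      rcases hcdir Z₁ h₁ Z₂ h₂ with h | h
      · exact ⟨⟨Z₂, h₂⟩, h, subset_rfl⟩
      · exact ⟨⟨Z₁, h₁⟩, subset_rfl, h⟩
    have hcover : ⋃ Z : G, cset Z = ⋃₀ G := by
      apply subset_antisymm
      · apply Set.iUnion_subset
        rintro ⟨Z, hZ⟩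
        apply Set.union_subset
        · exact Set.sUnion_subset fun B hB => Set.subset_sUnion_of_mem hB.1
        · exact Set.subset_sUnion_of_mem hZ
      · rintro x ⟨B, hB, hx⟩
        exact Set.mem_iUnion.2 ⟨⟨B, hB⟩, Set.mem_union_right _ hx⟩
    have hsup : P (⋃₀ G) = ⨆ Z : G, P (cset Z) := by
      rw [← hcover]
      exact hdirG.measure_iUnion
    have ht : t < P (⋃₀ G) := by
      rw [htdef]
      refine (ENNReal.sub_lt_iff_lt_right hS₀fin hup).2 ?_
      rw [add_comm]
      exact ha
    obtain ⟨⟨Z₀, hZ₀G⟩, hZ₀⟩ := lt_iSup_iff.1 (ht.trans_eq hsup)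
    set S' := {Z | Z ∈ G ∧ t ≤ P (cset Z)} with hS'def
    have hZ₀S : Z₀ ∈ S' := ⟨hZ₀G, hZ₀.le⟩
    set Lset := {n | ∃ Z ∈ S', Z ∈ F.part n} with hLdef
    have hLne : Lset.Nonempty := by
      obtain ⟨p, hp⟩ := F.mem_atoms_iff.1 (hGa hZ₀G)
      exact ⟨p, Z₀, hZ₀S, hp⟩
    obtain ⟨Z₁, hZ₁S, hZ₁p⟩ := Nat.sInf_mem hLne
    set T := {Z | Z ∈ S' ∧ Z ∈ F.part (sInf Lset)} with hTdef
    have hTfin : T.Finite := (F.part (sInf Lset)).finite_toSet.subset fun Z hZ => hZ.2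
    obtain ⟨Z, hZT, hZmax⟩ := Set.exists_max_image T P hTfin ⟨Z₁, hZ₁S, hZ₁p⟩
    have hZG : Z ∈ G := hZT.1.1
    have hZS : t ≤ P (cset Z) := hZT.1.2
    have hZn : Z ∈ F.part (sInf Lset) := hZT.2
    have hZE : Z ∈ F.eColl := hGe hZG
    have hmin : ∀ B ∈ G, Paper.Prec F B Z → P (cset B) < t := by
      intro B hBG hBZ
      by_contra hle
      push_neg at hle
      obtain ⟨l, mm, hBl, hZmm, hor⟩ := hBZ
      have hmm : mm = sInf Lset := F.level_unique hdist hZE hZmm hZn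
      have hBS : B ∈ S' := ⟨hBG, hle⟩
      have hlev : sInf Lset ≤ l := Nat.sInf_le ⟨B, hBS, hBl⟩
      rcases hor with h | ⟨heq, h⟩
      · omega
      · have hBT : B ∈ T := ⟨hBS, by rw [heq, hmm] at hBl; exact hBl⟩
        exact absurd (hZmax B hBT) (not_le.2 h)
    have hVt : P (⋃₀ {B | B ∈ G ∧ Paper.Prec F B Z}) ≤ t := by
      set V := {B | B ∈ G ∧ Paper.Prec F B Z} with hVdef
      haveI : Countable V := (hGcnt.mono fun B hB => hB.1).to_subtype
      have hVsub : ⋃₀ V ⊆ ⋃ B : V, cset B := by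
        rintro x ⟨B, hB, hx⟩
        exact Set.mem_iUnion.2 ⟨⟨B, hB⟩, Set.mem_union_right _ hx⟩
      have hVdir : Directed (· ⊆ ·) (fun B : V => cset B) := by
        rintro ⟨B₁, h₁⟩ ⟨B₂, h₂⟩
        rcases hcdir B₁ h₁.1 B₂ h₂.1 with h | h
        · exact ⟨⟨B₂, h₂⟩, h, subset_rfl⟩
        · exact ⟨⟨B₁, h₁⟩, subset_rfl, h⟩
      calc P (⋃₀ V) ≤ P (⋃ B : V, cset B) := measure_mono hVsub
        _ = ⨆ B : V, P (cset B) := hVdir.measure_iUnion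
        _ ≤ t := iSup_le fun B => (hmin B.1 B.2.1 B.2.2).le
    refine ⟨Z, hZG, ?_⟩
    unfold Paper.CondD
    have hUeq : ∀ j ∈ Finset.Icc 1 m,
        Paper.Uset F (Function.update Y (m + 1) Z) j = Paper.Uset F Y j := by
      intro j hj
      rw [Finset.mem_Icc] at hj
      unfold Paper.Uset
      rw [Function.update_of_ne (by omega : j ≠ m + 1),
        Function.update_of_ne (by omega : j - 1 ≠ m + 1)]
    have hUnew : Paper.Uset F (Function.update Y (m + 1) Z) (m + 1)
        = {B | B ∈ G ∧ Paper.Prec F B Z} := by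
      unfold Paper.Uset
      rw [show m + 1 - 1 = m by omega,
        Function.update_of_ne (by omega : m ≠ m + 1), Function.update_self, hGdef]
    have hsum : ∑ j ∈ Finset.Icc 1 (m + 1), P (⋃₀ Paper.Uset F (Function.update Y (m + 1) Z) j)
        = S₀ + P (⋃₀ {B | B ∈ G ∧ Paper.Prec F B Z}) := by
      rw [Finset.sum_Icc_succ_top (by omega : 1 ≤ m + 1)]
      congr 1
      · rw [hS₀def]
        exact Finset.sum_congr rfl fun j hj => by rw [hUeq j hj]
      · rw [hUnew]
    refine ⟨?_, ?_, ?_, ?_⟩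
    · rw [Function.update_of_ne (by omega : (0 : ℕ) ≠ m + 1)]
      exact hY0
    · intro j hj
      rw [Finset.mem_Icc] at hj
      by_cases hjm : j = m + 1
      · subst hjm
        rw [Function.update_self, show m + 1 - 1 = m by omega,
          Function.update_of_ne (by omega : m ≠ m + 1)]
        exact hZG
      · rw [Function.update_of_ne hjm, Function.update_of_ne (by omega : j - 1 ≠ m + 1)]
        exact hstep j (Finset.mem_Icc.2 ⟨hj.1, by omega⟩)
    · rw [hsum]
      calc S₀ + P (⋃₀ {B | B ∈ G ∧ Paper.Prec F B Z}) ≤ S₀ + t := add_le_add_right hVt S₀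
        _ = 2⁻¹ * P A := hadd
    · rw [hsum, Function.update_self]
      have h1 : t ≤ P (⋃₀ {B | B ∈ G ∧ Paper.Prec F B Z}) + P Z :=
        hZS.trans (measure_union_le _ _)
      calc 2⁻¹ * P A = S₀ + t := hadd.symm
        _ ≤ S₀ + (P (⋃₀ {B | B ∈ G ∧ Paper.Prec F B Z}) + P Z) := add_le_add_right h1 S₀
        _ = P Z + (S₀ + P (⋃₀ {B | B ∈ G ∧ Paper.Prec F B Z})) := by ring
  · -- (b)
    intro hb
    have hYmG1 : Y m ∈ Paper.G1 F.eColl (Y (m - 1)) :=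
      hstep m (Finset.mem_Icc.2 ⟨hm0, le_rfl⟩)
    have hYmE : Y m ∈ F.eColl := hYmG1.1
    have hYmA : Y m ∈ F.atoms := hYmE.1
    obtain ⟨l, hl⟩ := F.mem_atoms_iff.1 hYmA
    set bound := ENNReal.ofReal (ε / 2) * P A with hbdef
    have hboundfin : bound ≠ ∞ := ENNReal.mul_ne_top ENNReal.ofReal_ne_top hPA_fin
    have hboundpos : 0 < bound := by
      refine ENNReal.mul_pos ?_ hPA_pos.ne'
      simp only [ne_eq, ENNReal.ofReal_eq_zero, not_le]
      linarith
    -- Step A : P (Y m \ ⋃₀ G) ≤ bound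
    obtain ⟨k', hkk'⟩ : ∃ k', k = k' + 1 := ⟨k - 1, by omega⟩
    have hGkcoll : Paper.Gk F.eColl k A ⊆ F.eColl := by
      rw [hkk']
      exact Paper.Gk_subset_coll k'
    have hGkcnt : (Paper.Gk F.eColl k A).Countable :=
      F.atoms_countable.mono (hGkcoll.trans F.eColl_subset_atoms)
    have hGkmeas : MeasurableSet (⋃₀ Paper.Gk F.eColl k A) :=
      MeasurableSet.sUnion hGkcnt fun E hE =>
        F.atoms_meas (F.eColl_subset_atoms (hGkcoll hE))
    have hGksub : ⋃₀ Paper.Gk F.eColl k A ⊆ A :=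
      Set.sUnion_subset fun E hE => Paper.Gk_subset_base k E hE
    have hstep1 : P (A \ ⋃₀ Paper.Gk F.eColl k A) ≤ bound := by
      rw [measure_diff hGksub hGkmeas.nullMeasurableSet
        (ne_top_of_le_ne_top hPA_fin (measure_mono hGksub))]
      have hcalc : ENNReal.ofReal 1 * P A - ENNReal.ofReal (1 - ε / 2) * P A = bound := by
        rw [← ENNReal.sub_mul fun _ _ => hPA_fin,
          ← ENNReal.ofReal_sub 1 (by linarith : (0 : ℝ) ≤ 1 - ε / 2), hbdef]
        norm_num
      calc P A - P (⋃₀ Paper.Gk F.eColl k A)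
          ≤ P A - ENNReal.ofReal (1 - ε / 2) * P A := tsub_le_tsub_left hbig.le _
        _ = ENNReal.ofReal 1 * P A - ENNReal.ofReal (1 - ε / 2) * P A := by
            rw [ENNReal.ofReal_one, one_mul]
        _ = bound := hcalc
    have hdiffYm : P (Y m \ ⋃₀ G) ≤ bound :=
      (measure_mono (Paper.descend F hmk hY0 hstep)).trans hstep1
    -- Step B : tail estimate
    set low : ℕ → Set (Set Ω) := fun N => {B | B ∈ G ∧ ∃ p ≤ N, B ∈ F.part p} with hlowdef
    have hlowG : ∀ N, low N ⊆ G := fun N B hB => hB.1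
    have hlmono : ∀ N₁ N₂, N₁ ≤ N₂ → ⋃₀ low N₁ ⊆ ⋃₀ low N₂ := by
      intro N₁ N₂ h
      apply Set.sUnion_subset_sUnion
      rintro B ⟨hBG, p, hp, hBp⟩
      exact ⟨hBG, p, hp.trans h, hBp⟩
    have hlcover : ⋃ N, ⋃₀ low N = ⋃₀ G := by
      apply subset_antisymm
      · exact Set.iUnion_subset fun N =>
          Set.sUnion_subset fun B hB => Set.subset_sUnion_of_mem hB.1
      · rintro x ⟨B, hB, hx⟩
        obtain ⟨p, hp⟩ := F.mem_atoms_iff.1 (hGa hB)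
        exact Set.mem_iUnion.2 ⟨p, ⟨B, ⟨hB, p, le_rfl, hp⟩, hx⟩⟩
    have hsupl : P (⋃₀ G) = ⨆ N, P (⋃₀ low N) := by
      rw [← hlcover]
      exact Directed.measure_iUnion (directed_of_isDirected_le fun N₁ N₂ h => hlmono N₁ N₂ h)
    obtain ⟨N₀, hN₀⟩ : ∃ N, P (⋃₀ G) ≤ P (⋃₀ low N) + bound := by
      by_cases hc : P (⋃₀ G) ≤ bound
      · exact ⟨0, hc.trans (le_add_left le_rfl)⟩
      · push_neg at hc
        have h1 : P (⋃₀ G) - bound < P (⋃₀ G) :=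
          ENNReal.sub_lt_self (measure_ne_top P _) (hboundpos.trans hc).ne' hboundpos.ne'
        obtain ⟨N, hN⟩ := lt_iSup_iff.1 (h1.trans_eq hsupl)
        exact ⟨N, ((ENNReal.sub_lt_iff_lt_right hboundfin hc.le).1 hN).le⟩
    have hN : P (⋃₀ G) ≤ P (⋃₀ low (max N₀ l)) + bound :=
      hN₀.trans (add_le_add_left (measure_mono (hlmono N₀ _ (le_max_left _ _))) bound)
    set N := max N₀ l with hNdef
    -- Step C : the atom W
    set Sc : ℕ → Set Ω :=
      fun i => Nat.rec (motive := fun _ => Set Ω) (Y m) (fun i Si => F.star (l + i) Si) i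
      with hScdef
    have hScpart : ∀ i, Sc i ∈ F.part (l + i) := by
      intro i
      induction i with
      | zero => exact hl
      | succ i ih => exact F.star_mem (l + i) _ ih
    have hScmono : ∀ i, Sc (i + 1) ⊆ Sc i := fun i => F.star_sub (l + i) _ (hScpart i)
    have hScsub : ∀ i, Sc i ⊆ Y m := by
      intro i
      induction i with
      | zero => exact subset_rfl
      | succ i ih => exact (hScmono i).trans ih
    have hSc1 : ∀ i, 1 ≤ i → Sc i ⊆ Sc 1 := by
      intro i
      induction i with
      | zero => omega
      | succ i ih =>
        intro _
        rcases Nat.lt_or_ge i 1 with h | h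
        · have : i = 0 := by omega
          subst this
          exact subset_rfl
        · exact (hScmono i).trans (ih h)
    set W := Sc (N + 1 - l) with hWdef
    have hWpart : W ∈ F.part (N + 1) := by
      have := hScpart (N + 1 - l)
      rwa [show l + (N + 1 - l) = N + 1 by omega] at this
    have hWA : W ∈ F.atoms := F.mem_atoms_iff.2 ⟨N + 1, hWpart⟩
    have hWYm : W ⊆ Y m := hScsub _
    have hWne : W ≠ Y m := by
      intro hEq
      have hsub1 : Y m ⊆ Sc 1 := hEq ▸ hSc1 _ (by omega)
      have heq1 : Sc 1 = Y m := subset_antisymm (hScsub 1) hsub1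
      have hSc1eq : Sc 1 = F.star l (Y m) := by rw [hScdef]; simp
      exact hYmE.2 ⟨l, Y m, hl, by rw [← hSc1eq, heq1]⟩
    have hW : W ⊂ Y m := hWYm.ssubset_of_ne hWne
    refine ⟨W, hWA, hW, ?_⟩
    set U := {B | B ∈ G ∧ Paper.Prec F B W} with hUdef
    have hlowU : low N ⊆ U := by
      rintro B ⟨hBG, p, hpN, hBp⟩
      exact ⟨hBG, p, N + 1, hBp, hWpart, Or.inl (by omega)⟩
    have hUG : U ⊆ G := fun B hB => hB.1
    have hUYm : ⋃₀ U ⊆ Y m :=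
      Set.sUnion_subset fun B hB => (Paper.G1_ssubset (hUG hB)).subset
    have hlowmeas : MeasurableSet (⋃₀ low N) :=
      MeasurableSet.sUnion (hGcnt.mono (hlowG N)) fun B hB => F.atoms_meas (hGa (hlowG N hB))
    have htail : P (⋃₀ G \ ⋃₀ low N) ≤ bound := by
      rw [measure_diff (Set.sUnion_subset_sUnion (hlowG N)) hlowmeas.nullMeasurableSet
        (measure_ne_top P _)]
      rw [tsub_le_iff_right, add_comm]
      exact hN
    have hkey : P (Y m \ ⋃₀ U) ≤ ENNReal.ofReal ε * P A := by
      have hsplit : Y m \ ⋃₀ U ⊆ (Y m \ ⋃₀ G) ∪ (⋃₀ G \ ⋃₀ low N) := by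
        rintro x ⟨hx1, hx2⟩
        by_cases hxG : x ∈ ⋃₀ G
        · exact Or.inr ⟨hxG, fun hxl => hx2 (Set.sUnion_subset_sUnion hlowU hxl)⟩
        · exact Or.inl ⟨hx1, hxG⟩
      calc P (Y m \ ⋃₀ U) ≤ P (Y m \ ⋃₀ G) + P (⋃₀ G \ ⋃₀ low N) :=
            (measure_mono hsplit).trans (measure_union_le _ _)
        _ ≤ bound + bound := add_le_add hdiffYm htail
        _ = ENNReal.ofReal ε * P A := by
            rw [hbdef, ← add_mul, ← ENNReal.ofReal_add (by linarith) (by linarith), add_halves]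
    have hupper : S₀ + P (⋃₀ U) ≤ 2⁻¹ * P A :=
      (add_le_add_right (measure_mono (Set.sUnion_subset_sUnion hUG)) S₀).trans hb
    have hlower : ENNReal.ofReal (1 / 2 - ε) * P A ≤ S₀ + P (⋃₀ U) := by
      have h2 : P (Y m) ≤ P (⋃₀ U) + ENNReal.ofReal ε * P A := by
        calc P (Y m) ≤ P (⋃₀ U ∪ Y m \ ⋃₀ U) := measure_mono fun x hx => by
              by_cases h : x ∈ ⋃₀ U
              · exact Or.inl h
              · exact Or.inr ⟨hx, h⟩
          _ ≤ P (⋃₀ U) + P (Y m \ ⋃₀ U) := measure_union_le _ _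
          _ ≤ P (⋃₀ U) + ENNReal.ofReal ε * P A := add_le_add_right hkey _
      have h3 : 2⁻¹ * P A ≤ (S₀ + P (⋃₀ U)) + ENNReal.ofReal ε * P A := by
        calc 2⁻¹ * P A ≤ P (Y m) + S₀ := hlo
          _ ≤ (P (⋃₀ U) + ENNReal.ofReal ε * P A) + S₀ := add_le_add_left h2 S₀
          _ = (S₀ + P (⋃₀ U)) + ENNReal.ofReal ε * P A := by ring
      have haux1 : (1 / 2 - ε + ε : ℝ) = 1 / 2 := by ring
      have haux2 : ENNReal.ofReal (1 / 2 : ℝ) = 2⁻¹ := by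
        rw [one_div, ENNReal.ofReal_inv_of_pos (by norm_num : (0 : ℝ) < 2)]
        norm_num
      have hhalf : ENNReal.ofReal (1 / 2 - ε) * P A + ENNReal.ofReal ε * P A = 2⁻¹ * P A := by
        rw [← add_mul, ← ENNReal.ofReal_add (by linarith) hε0.le, haux1, haux2]
      refine (ENNReal.add_le_add_iff_right (a := ENNReal.ofReal ε * P A)
        (ENNReal.mul_ne_top ENNReal.ofReal_ne_top hPA_fin)).1 ?_
      rw [hhalf]
      exact h3
    exact ⟨hlower, hupper, hkey⟩
end
end
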